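/- arXiv:1911.09072 — 8 statements merged into one kernel-verified Lean document; each statement's English description precedes it below -/
import Mathlib

section
/- Let A be an n×p matrix with entries in ℕ, n ≥ 2, whose rank is strictly less than n. Then, after a suitable permutation of the rows (coordinates of ℕ^n), there is a positive integer d such that, if A' denotes the (n−1)×p matrix consisting of the first n−1 rows of dA, then the toric ideals of A and A' coincide: I_{A'} = I_A as ideals of k[x_1,…,x_p]; in particular the semigroup rings k[A'] and k[A] are isomorphic as k-algebras. -/
open MvPolynomial

/-- The toric ideal `I_A ⊆ k[x_j : j ∈ σ]` of a family `A` of vectors in `ℕ^n`: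
the kernel of the `k`-algebra map sending `x_j` to `t^{a_j} = ∏ i, t_i^{(a_j)_i}`. -/
noncomputable def toricIdeal (k : Type) [Field k] {σ : Type} {n : ℕ} (A : σ → Fin n → ℕ) :
    Ideal (MvPolynomial σ k) :=
  RingHom.ker (aeval (R := k) fun j => ∏ i, (X i : MvPolynomial (Fin n) k) ^ A j i)

/-- The exponent map `u ↦ A·u` on monomial exponents. -/
noncomputable def expMap {n p : ℕ} (A : Fin p → Fin n → ℕ) (u : Fin p →₀ ℕ) : Fin n →₀ ℕ :=
  Finsupp.equivFunOnFinite.symm fun i => ∑ j, u j * A j i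

lemma expMap_apply {n p : ℕ} (A : Fin p → Fin n → ℕ) (u : Fin p →₀ ℕ) (i : Fin n) :
    expMap A u i = ∑ j, u j * A j i := rfl

lemma expMap_eq_iff {n p : ℕ} (A : Fin p → Fin n → ℕ) (u v : Fin p →₀ ℕ) :
    expMap A u = expMap A v ↔ ∀ i, ∑ j, u j * A j i = ∑ j, v j * A j i := by
  constructor
  · intro h i
    have := DFunLike.congr_fun h i
    simpa [expMap_apply] using this
  · intro h
    ext i
    simpa [expMap_apply] using h i

lemma aeval_monomial_toric {k : Type} [Field k] {n p : ℕ} (A : Fin p → Fin n → ℕ)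
    (u : Fin p →₀ ℕ) (c : k) :
    aeval (R := k) (fun j => ∏ i, (X i : MvPolynomial (Fin n) k) ^ A j i) (monomial u c)
      = monomial (expMap A u) c := by
  rw [aeval_monomial]
  have h1 : (Finsupp.prod u fun j e =>
      (∏ i, (X i : MvPolynomial (Fin n) k) ^ A j i) ^ e)
      = ∏ j, (∏ i, (X i : MvPolynomial (Fin n) k) ^ A j i) ^ u j :=
    Finsupp.prod_fintype _ _ (fun j => pow_zero _)
  rw [h1]
  have h2 : ∏ j, (∏ i, (X i : MvPolynomial (Fin n) k) ^ A j i) ^ u j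
      = ∏ i, (X i : MvPolynomial (Fin n) k) ^ (expMap A u i) := by
    simp_rw [← Finset.prod_pow, ← pow_mul]
    rw [Finset.prod_comm]
    simp_rw [Finset.prod_pow_eq_pow_sum, expMap_apply]
    refine Finset.prod_congr rfl fun i _ => ?_
    congr 1
    exact Finset.sum_congr rfl fun j _ => Nat.mul_comm _ _
  rw [h2]
  have h3 : ∏ i, (X i : MvPolynomial (Fin n) k) ^ (expMap A u i)
      = monomial (expMap A u) (1 : k) := by
    rw [← prod_X_pow_eq_monomial]
    refine (Finset.prod_subset (Finset.subset_univ _) ?_).symm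
    intro i _ hi
    rw [Finsupp.notMem_support_iff.1 hi, pow_zero]
  rw [h3, algebraMap_eq, C_mul_monomial, mul_one]

lemma mem_toricIdeal_iff {k : Type} [Field k] {n p : ℕ} (A : Fin p → Fin n → ℕ)
    (f : MvPolynomial (Fin p) k) :
    f ∈ toricIdeal k A ↔ ∀ m : Fin n →₀ ℕ,
      ∑ u ∈ f.support.filter (fun u => expMap A u = m), coeff u f = 0 := by
  classical
  have hf : aeval (R := k) (fun j => ∏ i, (X i : MvPolynomial (Fin n) k) ^ A j i) f
      = ∑ u ∈ f.support, monomial (expMap A u) (coeff u f) := by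
    conv_lhs => rw [f.as_sum]
    rw [map_sum]
    exact Finset.sum_congr rfl fun u _ => aeval_monomial_toric A u _
  rw [toricIdeal, RingHom.mem_ker, hf]
  constructor
  · intro h m
    have := congrArg (coeff m) h
    rw [coeff_sum, coeff_zero] at this
    simp_rw [coeff_monomial] at this
    rwa [Finset.sum_filter]
  · intro h
    apply MvPolynomial.ext
    intro m
    rw [coeff_sum, coeff_zero]
    simp_rw [coeff_monomial]
    rw [← Finset.sum_filter]
    exact h m

lemma sum_fiber_aux {k : Type} [Field k] {α β γ : Type*} [DecidableEq β] [DecidableEq γ]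
    (s : Finset α) (f : α → k) (P : α → β) (Q : α → γ)
    (h : ∀ u v : α, P u = P v ↔ Q u = Q v)
    (H : ∀ m, ∑ u ∈ s.filter (fun u => P u = m), f u = 0) :
    ∀ m, ∑ u ∈ s.filter (fun u => Q u = m), f u = 0 := by
  intro m
  rcases (s.filter (fun u => Q u = m)).eq_empty_or_nonempty with he | ⟨v, hv⟩
  · simp [he]
  · have hv' := Finset.mem_filter.1 hv
    have key : s.filter (fun u => Q u = m) = s.filter (fun u => P u = P v) := by
      ext u
      simp only [Finset.mem_filter]
      constructor
      · rintro ⟨hu, h2⟩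
        exact ⟨hu, (h u v).2 (h2.trans hv'.2.symm)⟩
      · rintro ⟨hu, h2⟩
        exact ⟨hu, ((h u v).1 h2).trans hv'.2⟩
    rw [key]
    exact H _

lemma toricIdeal_eq_of_fibers {k : Type} [Field k] {n n' p : ℕ}
    (A : Fin p → Fin n → ℕ) (B : Fin p → Fin n' → ℕ)
    (h : ∀ u v : Fin p →₀ ℕ, expMap A u = expMap A v ↔ expMap B u = expMap B v) :
    toricIdeal k B = toricIdeal k A := by
  classical
  ext f
  rw [mem_toricIdeal_iff, mem_toricIdeal_iff]
  constructor
  · intro H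
    exact sum_fiber_aux f.support (fun u => coeff u f) (expMap B) (expMap A)
      (fun u v => (h u v).symm) H
  · intro H
    exact sum_fiber_aux f.support (fun u => coeff u f) (expMap A) (expMap B) h H

/-- If the `n×p` matrix of columns `a₁,…,a_p` has rank `< n` (with `n ≥ 2`), then after a
permutation of the rows there is a positive integer `d` such that the matrix `A'` of the
first `n−1` rows of `dA` has the same toric ideal as `A`; in particular `k[A'] ≅ k[A]`. -/
theorem degenerate_drop_row (k : Type) [Field k] {n p : ℕ} (hn : 2 ≤ n)
    (A : Fin p → Fin n → ℕ)
    (hrk : Matrix.rank (Matrix.of fun (i : Fin n) (j : Fin p) => (A j i : ℚ)) < n) :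
    ∃ (e : Equiv.Perm (Fin n)) (d : ℕ), 0 < d ∧
      toricIdeal k (fun j (i : Fin (n - 1)) => d * A j (e (Fin.castLE (Nat.sub_le n 1) i))) =
        toricIdeal k A ∧
      Nonempty
        ((MvPolynomial (Fin p) k ⧸
            toricIdeal k (fun j (i : Fin (n - 1)) => d * A j (e (Fin.castLE (Nat.sub_le n 1) i))))
          ≃ₐ[k] (MvPolynomial (Fin p) k ⧸ toricIdeal k A)) := by
  classical
  -- the rows are linearly dependent over ℚ
  have hdep : ¬ LinearIndependent ℚ (fun (i : Fin n) (j : Fin p) => (A j i : ℚ)) := by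
    intro h
    have := h.rank_matrix (M := Matrix.of fun (i : Fin n) (j : Fin p) => (A j i : ℚ))
    rw [this, Fintype.card_fin] at hrk
    exact lt_irrefl _ hrk
  obtain ⟨c, hc0, i₀, hci₀⟩ := Fintype.not_linearIndependent_iff.1 hdep
  have hc0' : ∀ j : Fin p, ∑ i, c i * (A j i : ℚ) = 0 := by
    intro j
    have := congrFun hc0 j
    simpa [Finset.sum_apply] using this
  -- the permutation: swap i₀ with the last row index
  have hn1 : n - 1 < n := by omega
  set lastIdx : Fin n := ⟨n - 1, hn1⟩ with hlastIdx
  set e : Equiv.Perm (Fin n) := Equiv.swap i₀ lastIdx with he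
  -- every row other than i₀ is hit by the first n-1 rows after permutation
  have hhit : ∀ i : Fin n, i ≠ i₀ → ∃ i' : Fin (n - 1), e (Fin.castLE (Nat.sub_le n 1) i') = i := by
    intro i hi
    have hne : e.symm i ≠ lastIdx := by
      intro hcontra
      have : i = e lastIdx := by rw [← hcontra, Equiv.apply_symm_apply]
      rw [he, Equiv.swap_apply_right] at this
      exact hi this
    have hlt : (e.symm i).val < n - 1 := by
      have h1 : (e.symm i).val < n := (e.symm i).isLt
      have h2 : (e.symm i).val ≠ n - 1 := fun hh => hne (Fin.ext hh)
      omega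
    refine ⟨⟨(e.symm i).val, hlt⟩, ?_⟩
    have : Fin.castLE (Nat.sub_le n 1) (⟨(e.symm i).val, hlt⟩ : Fin (n - 1)) = e.symm i :=
      Fin.ext rfl
    rw [this, Equiv.apply_symm_apply]
  -- the fibers of the exponent maps agree
  set B : Fin p → Fin (n - 1) → ℕ :=
    fun j i => 1 * A j (e (Fin.castLE (Nat.sub_le n 1) i)) with hB
  have hfib : ∀ u v : Fin p →₀ ℕ, expMap A u = expMap A v ↔ expMap B u = expMap B v := by
    intro u v
    rw [expMap_eq_iff, expMap_eq_iff]
    constructor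
    · intro h i'
      simp only [hB, one_mul]
      exact h _
    · intro h
      -- from equalities on all rows ≠ i₀ derive the one at i₀
      have hrow : ∀ i : Fin n, i ≠ i₀ → ∑ j, u j * A j i = ∑ j, v j * A j i := by
        intro i hi
        obtain ⟨i', hi'⟩ := hhit i hi
        have := h i'
        simp only [hB, one_mul] at this
        rwa [hi'] at this
      intro i
      by_cases hii : i = i₀
      swap
      · exact hrow i hii
      rw [hii]
      -- rational computation
      set S : Fin n → ℚ := fun i => ∑ j, ((u j : ℚ) - (v j : ℚ)) * (A j i : ℚ) with hS
      have hSzero : ∀ i : Fin n, i ≠ i₀ → S i = 0 := by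
        intro i2 hi2
        have := hrow i2 hi2
        have hq : (∑ j, (u j * A j i2 : ℕ) : ℚ) = (∑ j, (v j * A j i2 : ℕ) : ℚ) := by
          exact_mod_cast congrArg (fun x : ℕ => (x : ℚ)) this
        push_cast at hq
        rw [hS]
        simp only [sub_mul]
        rw [Finset.sum_sub_distrib, hq, sub_self]
      have hsum : ∑ i2, c i2 * S i2 = 0 := by
        rw [hS]
        simp only [Finset.mul_sum]
        rw [Finset.sum_comm]
        have : ∀ j : Fin p, ∑ i2, c i2 * (((u j : ℚ) - v j) * A j i2)
            = ((u j : ℚ) - v j) * ∑ i2, c i2 * (A j i2 : ℚ) := by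
          intro j
          rw [Finset.mul_sum]
          congr 1
          ext i2
          ring
        simp_rw [this]
        simp [hc0']
      have hsingle : ∑ i2, c i2 * S i2 = c i₀ * S i₀ := by
        apply Finset.sum_eq_single i₀
        · intro i2 _ hi2
          rw [hSzero i2 hi2, mul_zero]
        · intro hmem
          exact absurd (Finset.mem_univ i₀) hmem
      have hSi₀ : S i₀ = 0 := by
        have := hsingle.symm.trans hsum
        rcases mul_eq_zero.1 this with h1 | h2
        · exact absurd h1 hci₀
        · exact h2
      -- translate back to ℕ
      have hq : (∑ j, (u j : ℚ) * A j i₀) = ∑ j, (v j : ℚ) * A j i₀ := by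
        rw [hS] at hSi₀
        simp only [sub_mul] at hSi₀
        rw [Finset.sum_sub_distrib, sub_eq_zero] at hSi₀
        exact hSi₀
      have : ((∑ j, u j * A j i₀ : ℕ) : ℚ) = ((∑ j, v j * A j i₀ : ℕ) : ℚ) := by
        push_cast
        exact hq
      exact_mod_cast this
  have hIdeal : toricIdeal k B = toricIdeal k A := toricIdeal_eq_of_fibers A B hfib
  exact ⟨e, 1, one_pos, hIdeal, ⟨Ideal.quotientEquivAlgOfEq k hIdeal⟩⟩
end

section
/- Let A = (a_1,…,a_p) be a finite list of vectors in ℕ^n and b ∈ ℕ^n a nonzero vector with b ∈ ⟨A⟩, say b = Σ_{j=1}^p d_j a_j with d_j ∈ ℕ. Let k_1, k_2 be positive integers such that k_1 is relatively prime to gcd(b_1,…,b_n) and to k_2. Then for C = k_1A ∪ {k_2b} = (k_1a_1,…,k_1a_p, k_2b), with variable y corresponding to k_2b, one has I_C = I_A + ⟨ρ⟩ where ρ = y^{k_1} − ∏_{j=1}^p x_j^{d_j k_2}; in particular ⟨C⟩ is a gluing of ⟨A⟩ and ⟨b⟩. -/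
open MvPolynomial

namespace GlueAux

variable {k : Type} [Field k] {n : ℕ}

/-- View a function on `Fin n` as a finsupp. -/
noncomputable def toFs {n : ℕ} (v : Fin n → ℕ) : Fin n →₀ ℕ := Finsupp.equivFunOnFinite.symm v

@[simp] lemma toFs_apply (v : Fin n → ℕ) (i : Fin n) : toFs v i = v i := rfl

lemma prod_X_pow (v : Fin n → ℕ) :
    (∏ i, (X i : MvPolynomial (Fin n) k) ^ v i) = monomial (toFs v) 1 := by
  rw [← prod_X_pow_eq_monomial]
  refine (Finset.prod_subset (Finset.subset_univ _) ?_).symm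
  intro i _ hi
  simp only [Finsupp.mem_support_iff, not_not] at hi
  rw [toFs_apply] at hi
  simp [hi]

lemma expand_monomial_smul {m : ℕ} (hm : m ≠ 0) (u : Fin n →₀ ℕ) (c : k) :
    expand m (monomial u c) = monomial (m • u) c := by
  rw [expand_monomial, monomial_eq, Finsupp.prod, Finsupp.support_smul_eq hm]

lemma coeff_expand_not_dvd {m : ℕ} (hm : m ≠ 0) (g : MvPolynomial (Fin n) k) (w : Fin n →₀ ℕ)
    (hw : ¬ ∀ i, m ∣ w i) : coeff w (expand m g) = 0 := by
  conv_lhs => rw [← support_sum_monomial_coeff g]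
  rw [map_sum, coeff_sum]
  refine Finset.sum_eq_zero fun u _ => ?_
  rw [expand_monomial_smul hm, coeff_monomial, if_neg]
  rintro rfl
  exact hw fun i => ⟨u i, by simp⟩

lemma coeff_expand_smul {m : ℕ} (hm : 0 < m) (g : MvPolynomial (Fin n) k) (u : Fin n →₀ ℕ) :
    coeff (m • u) (expand m g) = coeff u g := by
  conv_lhs => rw [← support_sum_monomial_coeff g]
  rw [map_sum, coeff_sum]
  simp only [expand_monomial_smul hm.ne', coeff_monomial]
  rw [Finset.sum_eq_single u]
  · simp
  · intro u' _ hne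
    rw [if_neg]
    intro h
    refine hne ?_
    ext i
    have h2 := DFunLike.congr_fun h i
    simp only [Finsupp.smul_apply, smul_eq_mul] at h2
    exact Nat.eq_of_mul_eq_mul_left hm h2
  · intro hu
    simp [MvPolynomial.notMem_support_iff.mp hu]

lemma no_collision {n : ℕ} (b : Fin n → ℕ) (k1 k2 : ℕ)
    (hcop : Nat.Coprime k1 k2) (hcopb : Nat.Coprime k1 (Finset.univ.gcd b))
    {e e' : ℕ} (he : e < k1) (he' : e' < k1) (hne : e ≠ e')
    (h : ∀ i, e * (k2 * b i) ≡ e' * (k2 * b i) [MOD k1]) : False := by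
  wlog hlt : e' < e generalizing e e'
  · exact this he' he (Ne.symm hne) (fun i => (h i).symm) (by omega)
  have hd : ∀ i, k1 ∣ (e - e') * b i := by
    intro i
    have h1 := (Nat.modEq_iff_dvd' (Nat.mul_le_mul_right _ hlt.le)).mp (h i).symm
    rw [← Nat.sub_mul] at h1
    refine hcop.dvd_of_dvd_mul_right (m := (e - e') * b i) ?_
    rw [show (e - e') * b i * k2 = (e - e') * (k2 * b i) by ring]
    exact h1
  have hg : k1 ∣ (e - e') * Finset.univ.gcd b := by
    have := Finset.dvd_gcd (fun i (_ : i ∈ Finset.univ) => hd i)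
    rwa [Finset.gcd_mul_left, normalize_eq] at this
  have := Nat.le_of_dvd (by omega) (hcopb.dvd_of_dvd_mul_right hg)
  omega


end GlueAux

open GlueAux

/-- If `b = Σ d_j a_j ∈ ⟨A⟩` and `k₁` is relatively prime to `gcd(b₁,…,b_n)` and to `k₂`,
then for `C = k₁A ∪ {k₂b}`, one has `I_C = I_A + ⟨ρ⟩` with `ρ = y^{k₁} − ∏ x_j^{d_j k₂}`;
in particular `⟨C⟩` is a gluing of `⟨A⟩` and `⟨b⟩`. -/
theorem glue_of_b_in_A (k : Type) [Field k] {n p : ℕ}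
    (A : Fin p → Fin n → ℕ) (b : Fin n → ℕ) (hb : b ≠ 0)
    (d : Fin p → ℕ) (hbA : ∀ i, b i = ∑ j, d j * A j i)
    (k1 k2 : ℕ) (hk1 : 0 < k1) (hk2 : 0 < k2)
    (hcop : Nat.Coprime k1 k2) (hcopb : Nat.Coprime k1 (Finset.univ.gcd b)) :
    toricIdeal k (Sum.elim (fun j i => k1 * A j i) (fun _ : Unit => fun i => k2 * b i)) =
      Ideal.map (rename Sum.inl) (toricIdeal k A) ⊔
      Ideal.span {(X (Sum.inr ()) ^ k1 : MvPolynomial (Fin p ⊕ Unit) k) -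
        ∏ j, X (Sum.inl j) ^ (d j * k2)} := by
  classical
  set Cf : (Fin p ⊕ Unit) → Fin n → ℕ :=
    Sum.elim (fun j i => k1 * A j i) (fun _ : Unit => fun i => k2 * b i) with hCf
  set ρ : MvPolynomial (Fin p ⊕ Unit) k :=
    X (Sum.inr ()) ^ k1 - ∏ j, X (Sum.inl j) ^ (d j * k2) with hρdef
  set φC : MvPolynomial (Fin p ⊕ Unit) k →ₐ[k] MvPolynomial (Fin n) k :=
    aeval (R := k) (fun s => ∏ i, (X i : MvPolynomial (Fin n) k) ^ Cf s i) with hφC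
  set φA : MvPolynomial (Fin p) k →ₐ[k] MvPolynomial (Fin n) k :=
    aeval (R := k) (fun j => ∏ i, (X i : MvPolynomial (Fin n) k) ^ A j i) with hφA
  have memC : ∀ g, g ∈ toricIdeal k Cf ↔ φC g = 0 := fun g => RingHom.mem_ker
  have memA : ∀ g, g ∈ toricIdeal k A ↔ φA g = 0 := fun g => RingHom.mem_ker
  -- the "power substitution" compatibility
  have hcomp : (expand (σ := Fin n) (R := k) k1).comp φA
      = aeval (fun j => ∏ i, (X i : MvPolynomial (Fin n) k) ^ (k1 * A j i)) := by
    rw [hφA, comp_aeval]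
    congr 1
    funext j
    rw [map_prod]
    exact Finset.prod_congr rfl fun i _ => by rw [map_pow, expand_X, ← pow_mul, mul_comm]
  have hexp : ∀ g : MvPolynomial (Fin p) k, φC (rename Sum.inl g) = expand k1 (φA g) := by
    intro g
    rw [hφC, aeval_rename]
    have : ((fun s => ∏ i, (X i : MvPolynomial (Fin n) k) ^ Cf s i) ∘ Sum.inl)
        = fun j => ∏ i, (X i : MvPolynomial (Fin n) k) ^ (k1 * A j i) := rfl
    rw [this, ← hcomp, AlgHom.comp_apply]
  -- the binomial is in the big toric ideal
  have hprod_eq : (∏ i, (X i : MvPolynomial (Fin n) k) ^ (k2 * b i)) ^ k1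
      = ∏ j, (∏ i, (X i : MvPolynomial (Fin n) k) ^ (k1 * A j i)) ^ (d j * k2) := by
    calc (∏ i, (X i : MvPolynomial (Fin n) k) ^ (k2 * b i)) ^ k1
        = ∏ i, (X i : MvPolynomial (Fin n) k) ^ (k2 * b i * k1) := by
          rw [← Finset.prod_pow]
          exact Finset.prod_congr rfl fun i _ => (pow_mul _ _ _).symm
      _ = ∏ i, ∏ j, (X i : MvPolynomial (Fin n) k) ^ (k1 * A j i * (d j * k2)) := by
          refine Finset.prod_congr rfl fun i _ => ?_
          rw [Finset.prod_pow_eq_pow_sum]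
          congr 1
          rw [hbA i, Finset.mul_sum, Finset.sum_mul]
          exact Finset.sum_congr rfl fun j _ => by ring
      _ = ∏ j, ∏ i, (X i : MvPolynomial (Fin n) k) ^ (k1 * A j i * (d j * k2)) :=
          Finset.prod_comm
      _ = ∏ j, (∏ i, (X i : MvPolynomial (Fin n) k) ^ (k1 * A j i)) ^ (d j * k2) := by
          refine Finset.prod_congr rfl fun j _ => ?_
          rw [← Finset.prod_pow]
          exact Finset.prod_congr rfl fun i _ => pow_mul _ _ _
  have hρ0 : φC ρ = 0 := by
    rw [hρdef]
    simp only [map_sub, map_pow, map_prod, hφC, aeval_X]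
    rw [sub_eq_zero]
    exact hprod_eq
  refine le_antisymm ?_ (sup_le ?_ ?_)
  · -- hard direction
    intro f hf
    have hf0 : φC f = 0 := (memC f).mp hf
    set E : MvPolynomial (Fin p ⊕ Unit) k ≃ₐ[k] Polynomial (MvPolynomial (Fin p) k) :=
      (renameEquiv k (Equiv.optionEquivSumPUnit (Fin p)).symm).trans
        (optionEquivLeft k (Fin p)) with hE
    have hEXl : ∀ j : Fin p, E (X (Sum.inl j)) = Polynomial.C (X j) := by
      intro j
      rw [hE]
      simp [renameEquiv_apply, rename_X, optionEquivLeft_X_some,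
        Equiv.optionEquivSumPUnit_symm_inl]
    have hEX : E (X (Sum.inr () : Fin p ⊕ Unit) : MvPolynomial (Fin p ⊕ Unit) k)
        = Polynomial.X := by
      rw [hE]
      simp [renameEquiv_apply, rename_X, optionEquivLeft_X_none,
        Equiv.optionEquivSumPUnit_symm_inr]
    have hECpt : ∀ c : MvPolynomial (Fin p) k, E (rename Sum.inl c) = Polynomial.C c := by
      have h : (E.toAlgHom.comp (rename Sum.inl)).toRingHom
          = (Polynomial.C : MvPolynomial (Fin p) k →+* Polynomial (MvPolynomial (Fin p) k)) := by
        apply MvPolynomial.ringHom_ext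
        · intro a
          simp [hE, rename_C, optionEquivLeft_C]
        · intro j
          simp [hEXl j]
      intro c
      exact DFunLike.congr_fun h c
    set m0 : MvPolynomial (Fin p) k := ∏ j, X j ^ (d j * k2) with hm0
    have hEρ : E ρ = Polynomial.X ^ k1 - Polynomial.C m0 := by
      rw [hρdef, map_sub, map_pow, hEX]
      congr 1
      rw [show (∏ j, X (Sum.inl j) ^ (d j * k2) : MvPolynomial (Fin p ⊕ Unit) k)
          = rename Sum.inl m0 by rw [hm0, map_prod]; simp [rename_X]]
      exact hECpt m0
    have hmonic : (Polynomial.X ^ k1 - Polynomial.C m0).Monic :=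
      Polynomial.monic_X_pow_sub_C m0 hk1.ne'
    set r : Polynomial (MvPolynomial (Fin p) k) :=
      (E f) %ₘ (Polynomial.X ^ k1 - Polynomial.C m0) with hrdef
    set q : Polynomial (MvPolynomial (Fin p) k) :=
      (E f) /ₘ (Polynomial.X ^ k1 - Polynomial.C m0) with hqdef
    have hfrq : f = E.symm r + ρ * E.symm q := by
      apply E.injective
      rw [map_add, map_mul, AlgEquiv.apply_symm_apply, AlgEquiv.apply_symm_apply, hEρ]
      exact (Polynomial.modByMonic_add_div (E f) (Polynomial.X ^ k1 - Polynomial.C m0)).symm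
    have hdeg : r.natDegree < k1 := by
      have h1 : (Polynomial.X ^ k1 - Polynomial.C m0) ≠ 1 := by
        intro h
        have h2 := congrArg Polynomial.natDegree h
        rw [Polynomial.natDegree_X_pow_sub_C, Polynomial.natDegree_one] at h2
        omega
      have := Polynomial.natDegree_modByMonic_lt (E f) hmonic h1
      rwa [Polynomial.natDegree_X_pow_sub_C] at this
    set M : MvPolynomial (Fin n) k := ∏ i, X i ^ (k2 * b i) with hM
    set ψR : MvPolynomial (Fin p) k →+* MvPolynomial (Fin n) k :=
      ((expand (σ := Fin n) (R := k) k1).comp φA).toRingHom with hψRdef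
    have hψR : ∀ c, ψR c = expand k1 (φA c) := fun c => rfl
    have hEvalX : ∀ s, Polynomial.eval₂ ψR M (E (X s)) = φC (X s) := by
      rintro (j | u)
      · have h1 : ψR (X j) = ∏ i, (X i : MvPolynomial (Fin n) k) ^ (k1 * A j i) := by
          have h2 := DFunLike.congr_fun hcomp (X j)
          rw [AlgHom.comp_apply, aeval_X, aeval_X] at h2
          rw [hψR, hφA, aeval_X]
          exact h2
        rw [hEXl j, Polynomial.eval₂_C, h1, hφC, aeval_X]
        rfl
      · rw [hEX, Polynomial.eval₂_X, hφC, aeval_X, hM]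
        rfl
    have hEval : ∀ g, φC g = Polynomial.eval₂ ψR M (E g) := by
      intro g
      induction g using MvPolynomial.induction_on with
      | C a =>
        rw [show (C a : MvPolynomial (Fin p ⊕ Unit) k) = rename Sum.inl (C a) from
          (rename_C _ a).symm]
        rw [hexp, hECpt, Polynomial.eval₂_C, hψR]
      | add f1 f2 ih1 ih2 => rw [map_add, map_add, Polynomial.eval₂_add, ih1, ih2]
      | mul_X g s ih => rw [map_mul, map_mul, Polynomial.eval₂_mul, ih, hEvalX]
    have hfr0 : φC (E.symm r) = 0 := by
      have h1 := congrArg φC hfrq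
      rw [map_add, map_mul, hρ0, zero_mul, add_zero, hf0] at h1
      exact h1.symm
    set Bf : Fin n →₀ ℕ := toFs (fun i => k2 * b i) with hBf
    have hMBf : M = monomial Bf 1 := prod_X_pow _
    have hsum : ∑ e ∈ Finset.range k1,
        monomial (e • Bf) (1 : k) * expand k1 (φA (r.coeff e)) = 0 := by
      have h2 := hEval (E.symm r)
      rw [AlgEquiv.apply_symm_apply, hfr0,
        Polynomial.eval₂_eq_sum_range' ψR hdeg M] at h2
      refine Eq.trans (Finset.sum_congr rfl fun e _ => ?_) h2.symm
      rw [hψR, hMBf, monomial_pow, one_pow, mul_comm]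
    have hcoeffzero : ∀ e ∈ Finset.range k1, φA (r.coeff e) = 0 := by
      intro e he'
      have he : e < k1 := Finset.mem_range.mp he'
      rw [MvPolynomial.eq_zero_iff]
      intro u
      have h0 := congrArg (coeff (e • Bf + k1 • u)) hsum
      rw [MvPolynomial.coeff_sum, coeff_zero] at h0
      have hzero : ∀ e' ∈ Finset.range k1, e' ≠ e →
          coeff (e • Bf + k1 • u) (monomial (e' • Bf) (1:k) * expand k1 (φA (r.coeff e'))) = 0 := by
        intro e' he'' hne
        rw [coeff_monomial_mul']
        split_ifs with hle
        · rw [one_mul]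
          apply coeff_expand_not_dvd hk1.ne'
          intro hdvd
          refine no_collision b k1 k2 hcop hcopb he (Finset.mem_range.mp he'')
            (Ne.symm hne) fun i => ?_
          have hlei : e' * (k2 * b i) ≤ e * (k2 * b i) + k1 * u i := by
            have h3 := Finsupp.le_def.mp hle i
            simpa [hBf, Finsupp.smul_apply, Finsupp.add_apply, smul_eq_mul, toFs_apply]
              using h3
          have hdvdi := hdvd i
          simp only [Finsupp.tsub_apply, Finsupp.add_apply, Finsupp.smul_apply,
            smul_eq_mul, hBf, toFs_apply] at hdvdi
          have h4 : e' * (k2 * b i) ≡ e * (k2 * b i) + k1 * u i [MOD k1] :=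
            (Nat.modEq_iff_dvd' hlei).mpr hdvdi
          have h5 : e * (k2 * b i) ≡ e * (k2 * b i) + k1 * u i [MOD k1] :=
            (Nat.modEq_iff_dvd' (Nat.le_add_right _ _)).mpr
              (by rw [Nat.add_sub_cancel_left]; exact dvd_mul_right _ _)
          exact h5.trans h4.symm
        · rfl
      rw [Finset.sum_eq_single_of_mem e he' hzero] at h0
      rw [coeff_monomial_mul', if_pos le_self_add, add_tsub_cancel_left, one_mul,
        coeff_expand_smul hk1] at h0
      exact h0
    have hrmem : E.symm r ∈ Ideal.map (rename (R := k) Sum.inl) (toricIdeal k A) := by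
      have hEsymm_mon : ∀ (e : ℕ) (c : MvPolynomial (Fin p) k),
          E.symm (Polynomial.monomial e c)
            = rename Sum.inl c * X (Sum.inr ()) ^ e := by
        intro e c
        apply E.injective
        rw [AlgEquiv.apply_symm_apply, map_mul, map_pow, hEX, hECpt,
          Polynomial.C_mul_X_pow_eq_monomial]
      have hr_sum : E.symm r = ∑ e ∈ Finset.range k1,
          rename Sum.inl (r.coeff e) * X (Sum.inr ()) ^ e := by
        conv_lhs => rw [Polynomial.as_sum_range' r k1 hdeg]
        rw [map_sum]
        exact Finset.sum_congr rfl fun e _ => hEsymm_mon e _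
      rw [hr_sum]
      exact Ideal.sum_mem _ fun e he => Ideal.mul_mem_right _ _
        (Ideal.mem_map_of_mem _ ((memA _).mpr (hcoeffzero e he)))
    rw [hfrq]
    exact Ideal.add_mem _ (Ideal.mem_sup_left hrmem)
      (Ideal.mem_sup_right (Ideal.mul_mem_right _ _
        (Ideal.subset_span (Set.mem_singleton _))))
  · -- `map (rename inl) I_A ≤ I_C`
    rw [Ideal.map_le_iff_le_comap]
    intro g hg
    simp only [Ideal.mem_comap]
    exact (memC _).mpr (by rw [hexp g, (memA g).mp hg, map_zero])
  · -- `span {ρ} ≤ I_C`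
    rw [Ideal.span_le, Set.singleton_subset_iff]
    exact (memC ρ).mpr hρ0
end

section
/- Let A = (a_1,…,a_p) be a finite list of vectors in ℕ^n, b ∈ ℕ^n nonzero, and k_1, k_2 positive integers with gcd(k_1,k_2) = 1 and gcd(k_1, gcd(b_1,…,b_n)) = 1. Let C = k_1A ∪ {k_2b} with variable y corresponding to k_2b. Then every binomial of the form w = y^{γ}·∏_j x_j^{α_j} − ∏_j x_j^{β_j} (γ ≥ 0, α, β ∈ ℕ^p) lying in the toric ideal I_C has γ divisible by k_1. -/
open MvPolynomial

lemma prod_X_pow_fun_eq_monomial {k : Type} [Field k] {n : ℕ} (u : Fin n → ℕ) :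
    (∏ i, (X i : MvPolynomial (Fin n) k) ^ u i)
      = monomial (Finsupp.equivFunOnFinite.symm u) 1 := by
  classical
  set s : Fin n →₀ ℕ := Finsupp.equivFunOnFinite.symm u with hs
  have husu : ∀ i, u i = s i := fun i => rfl
  rw [← prod_X_pow_eq_monomial]
  refine (Finset.prod_subset (Finset.subset_univ _) ?_).symm
  intro i _ hi
  have h0 : s i = 0 := Finsupp.notMem_support_iff.mp hi
  rw [husu i, h0, pow_zero]

lemma prod_X_pow_inj {k : Type} [Field k] {n : ℕ} (u v : Fin n → ℕ)
    (h : (∏ i, (X i : MvPolynomial (Fin n) k) ^ u i) = ∏ i, X i ^ v i) : u = v := by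
  rw [prod_X_pow_fun_eq_monomial, prod_X_pow_fun_eq_monomial] at h
  have := monomial_left_injective (one_ne_zero (α := k)) h
  exact Finsupp.equivFunOnFinite.symm.injective this

/-- For `C = k₁A ∪ {k₂b}` with `gcd(k₁,k₂) = 1` and `gcd(k₁, gcd(b₁,…,b_n)) = 1`, any
binomial `y^γ ∏ x_j^{α_j} − ∏ x_j^{β_j}` in `I_C` has `γ` divisible by `k₁`. -/
theorem k1_dvd_y_exponent (k : Type) [Field k] {n p : ℕ}
    (A : Fin p → Fin n → ℕ) (b : Fin n → ℕ) (hb : b ≠ 0)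
    (k1 k2 : ℕ) (hk1 : 0 < k1) (hk2 : 0 < k2)
    (hcop : Nat.Coprime k1 k2) (hcopb : Nat.Coprime k1 (Finset.univ.gcd b))
    (γ : ℕ) (α β : Fin p → ℕ)
    (hw : (X (Sum.inr ()) ^ γ * ∏ j, X (Sum.inl j) ^ α j : MvPolynomial (Fin p ⊕ Unit) k) -
        (∏ j, X (Sum.inl j) ^ β j) ∈
      toricIdeal k (Sum.elim (fun j i => k1 * A j i) (fun _ : Unit => fun i => k2 * b i))) :
    k1 ∣ γ := by
  classical
  rw [toricIdeal, RingHom.mem_ker, map_sub, sub_eq_zero] at hw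
  simp only [map_mul, map_prod, map_pow, aeval_X, Sum.elim_inl, Sum.elim_inr] at hw
  -- rewrite powers of products
  have hpow : ∀ (c : Fin n → ℕ) (e : ℕ),
      ((∏ i, (X i : MvPolynomial (Fin n) k) ^ c i) ^ e) = ∏ i, X i ^ (e * c i) := by
    intro c e
    rw [← Finset.prod_pow]
    exact Finset.prod_congr rfl fun i _ => by rw [← pow_mul, mul_comm]
  rw [hpow] at hw
  have hα : (∏ j, (∏ i, (X i : MvPolynomial (Fin n) k) ^ (k1 * A j i)) ^ α j)
      = ∏ i, X i ^ (∑ j, α j * (k1 * A j i)) := by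
    simp_rw [hpow]
    rw [Finset.prod_comm]
    exact Finset.prod_congr rfl fun i _ => Finset.prod_pow_eq_pow_sum _ _ _
  have hβ : (∏ j, (∏ i, (X i : MvPolynomial (Fin n) k) ^ (k1 * A j i)) ^ β j)
      = ∏ i, X i ^ (∑ j, β j * (k1 * A j i)) := by
    simp_rw [hpow]
    rw [Finset.prod_comm]
    exact Finset.prod_congr rfl fun i _ => Finset.prod_pow_eq_pow_sum _ _ _
  rw [hα, hβ, ← Finset.prod_mul_distrib] at hw
  simp_rw [← pow_add] at hw
  have heq := prod_X_pow_inj _ _ hw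
  have hkey : ∀ i, k1 ∣ γ * b i := by
    intro i
    have hi := congrFun heq i
    have hsum : γ * (k2 * b i) + k1 * (∑ j, α j * A j i) = k1 * (∑ j, β j * A j i) := by
      rw [Finset.mul_sum, Finset.mul_sum]
      simpa [mul_left_comm, mul_comm, mul_assoc] using hi
    have h1 : k1 ∣ γ * (k2 * b i) := by
      have hd := Nat.dvd_sub (Dvd.intro _ rfl : k1 ∣ k1 * ∑ j, β j * A j i)
        (Dvd.intro _ rfl : k1 ∣ k1 * ∑ j, α j * A j i)
      have he : γ * (k2 * b i)
          = k1 * (∑ j, β j * A j i) - k1 * (∑ j, α j * A j i) := by omega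
      rw [he]; exact hd
    have h1' : k1 ∣ k2 * (γ * b i) := by
      have hc : k2 * (γ * b i) = γ * (k2 * b i) := by ring
      rw [hc]; exact h1
    exact hcop.dvd_of_dvd_mul_left h1'
  have hdvd : k1 ∣ γ * Finset.univ.gcd b := by
    have h3 : (Finset.univ.gcd fun i => γ * b i) = γ * Finset.univ.gcd b := by
      simpa using (Finset.gcd_mul_left (a := γ) (f := b) (s := Finset.univ))
    rw [← h3]
    exact Finset.dvd_gcd fun i _ => hkey i
  exact hcopb.dvd_of_dvd_mul_right hdvd
end

section
/- Let A = (a_1,…,a_p) be a finite list of vectors in ℕ^n, A also denoting the n×p matrix with columns a_1,…,a_p, and let b ∈ ℕ^n be nonzero. Then ⟨A⟩ and ⟨b⟩ can be glued (i.e. there exist positive integers k_1, k_2 such that for C = k_1A ∪ {k_2b}, I_C = I_A + ⟨ρ⟩ for some binomial ρ = y^d − x^α with d > 0 and α ∈ ℕ^p nonzero) if and only if some positive multiple of b belongs to ⟨A⟩, equivalently if and only if the linear system A·X = d·b has a solution X ∈ ℕ^p for some positive integer d. -/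
open MvPolynomial

/-- `⟨A ∪ {b}⟩` is a gluing of `⟨A⟩` and `⟨b⟩`: `I_C = I_A + ⟨y^d − x^α⟩`
for some `d > 0` and `α ≠ 0`. -/
def IsGluingSingle (k : Type) [Field k] {n p : ℕ}
    (A : Fin p → Fin n → ℕ) (b : Fin n → ℕ) : Prop :=
  ∃ (d : ℕ) (α : Fin p → ℕ), 0 < d ∧ α ≠ 0 ∧
    toricIdeal k (Sum.elim A fun _ : Unit => b) =
      Ideal.map (rename Sum.inl) (toricIdeal k A) ⊔
      Ideal.span {(X (Sum.inr ()) ^ d : MvPolynomial (Fin p ⊕ Unit) k) -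
        ∏ j, X (Sum.inl j) ^ α j}

/-- `⟨A⟩` and `⟨b⟩` can be glued. -/
def CanBeGluedSingle (k : Type) [Field k] {n p : ℕ}
    (A : Fin p → Fin n → ℕ) (b : Fin n → ℕ) : Prop :=
  ∃ k1 k2 : ℕ, 0 < k1 ∧ 0 < k2 ∧
    IsGluingSingle k (fun j i => k1 * A j i) (fun i => k2 * b i)

lemma prodXpow_eq_monomial (k : Type) [Field k] {n : ℕ} (c : Fin n → ℕ) :
    (∏ i, (X i : MvPolynomial (Fin n) k) ^ c i) =
      monomial (Finsupp.equivFunOnFinite.symm c) 1 := by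
  rw [← prod_X_pow_eq_monomial]
  refine (Finset.prod_subset (Finset.subset_univ _) ?_).symm
  intro i _ hi
  show (X i : MvPolynomial (Fin n) k) ^ (Finsupp.equivFunOnFinite.symm c) i = 1
  rw [Finsupp.notMem_support_iff.mp hi, pow_zero]

lemma prodXpow_inj (k : Type) [Field k] {n : ℕ} (c c' : Fin n → ℕ)
    (h : (∏ i, (X i : MvPolynomial (Fin n) k) ^ c i) = ∏ i, X i ^ c' i) : c = c' := by
  rw [prodXpow_eq_monomial, prodXpow_eq_monomial] at h
  exact Finsupp.equivFunOnFinite.symm.injective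
    (monomial_left_injective (one_ne_zero (α := k)) h)

lemma prodXpow_pow (k : Type) [Field k] {n : ℕ} (c : Fin n → ℕ) (d : ℕ) :
    (∏ i, (X i : MvPolynomial (Fin n) k) ^ c i) ^ d = ∏ i, X i ^ (d * c i) := by
  rw [← Finset.prod_pow]
  exact Finset.prod_congr rfl fun i _ => by rw [← pow_mul, mul_comm]

lemma prod_prodXpow (k : Type) [Field k] {n p : ℕ} (M : Fin p → Fin n → ℕ) (c : Fin p → ℕ) :
    ∏ j, (∏ i, (X i : MvPolynomial (Fin n) k) ^ M j i) ^ c j =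
      ∏ i, (X i : MvPolynomial (Fin n) k) ^ (∑ j, c j * M j i) := by
  calc ∏ j, (∏ i, (X i : MvPolynomial (Fin n) k) ^ M j i) ^ c j
      = ∏ j, ∏ i, (X i : MvPolynomial (Fin n) k) ^ (c j * M j i) := by
        refine Finset.prod_congr rfl fun j _ => ?_
        rw [← Finset.prod_pow]
        exact Finset.prod_congr rfl fun i _ => by rw [← pow_mul, mul_comm]
    _ = ∏ i, ∏ j, (X i : MvPolynomial (Fin n) k) ^ (c j * M j i) := Finset.prod_comm
    _ = ∏ i, (X i : MvPolynomial (Fin n) k) ^ (∑ j, c j * M j i) := by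
        exact Finset.prod_congr rfl fun i _ => by rw [Finset.prod_pow_eq_pow_sum]

lemma glue_of_solution (k : Type) [Field k] {n p : ℕ} (A : Fin p → Fin n → ℕ)
    (b : Fin n → ℕ) (Xv : Fin p → ℕ) (h : ∀ i, ∑ j, Xv j * A j i = b i) :
    toricIdeal k (Sum.elim A fun _ : Unit => b) =
      Ideal.map (rename Sum.inl) (toricIdeal k A) ⊔
      Ideal.span {(X (Sum.inr ()) : MvPolynomial (Fin p ⊕ Unit) k) -
        ∏ j, X (Sum.inl j) ^ Xv j} := by
  set φA : MvPolynomial (Fin p) k →ₐ[k] MvPolynomial (Fin n) k :=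
    aeval (fun j => ∏ i, (X i : MvPolynomial (Fin n) k) ^ A j i) with hφA
  set m : MvPolynomial (Fin p) k := ∏ j, (X j : MvPolynomial (Fin p) k) ^ Xv j with hm
  set e : MvPolynomial (Fin p ⊕ Unit) k →ₐ[k] MvPolynomial (Fin p) k :=
    aeval (Sum.elim X (fun _ => m)) with he
  set ψ : MvPolynomial (Fin p ⊕ Unit) k →ₐ[k] MvPolynomial (Fin n) k :=
    aeval (fun j => ∏ i, (X i : MvPolynomial (Fin n) k) ^
      (Sum.elim A (fun _ : Unit => b)) j i) with hψ
  have hrm : rename (R := k) (Sum.inl : Fin p → Fin p ⊕ Unit) m =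
      ∏ j, X (Sum.inl j) ^ Xv j := by
    rw [hm, map_prod]; simp
  have heid : e.comp (rename Sum.inl) = AlgHom.id k (MvPolynomial (Fin p) k) := by
    apply algHom_ext; intro j; simp [he]
  have heid' : ∀ f, e (rename Sum.inl f) = f := fun f => DFunLike.congr_fun heid f
  have hφAm : φA m = ∏ i, (X i : MvPolynomial (Fin n) k) ^ b i := by
    rw [hm, map_prod]
    simp only [map_pow, hφA, aeval_X]
    rw [prod_prodXpow]
    exact Finset.prod_congr rfl fun i _ => by rw [h i]
  have hcomp : ψ = φA.comp e := by
    apply algHom_ext; intro j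
    cases j with
    | inl j => simp [hψ, he, hφA]
    | inr u => simp only [hψ, he, aeval_X, Sum.elim_inr, AlgHom.comp_apply, hφAm]
  have hcomp' : ∀ f, ψ f = φA (e f) := fun f => by rw [hcomp]; rfl
  set ρ : MvPolynomial (Fin p ⊕ Unit) k :=
    (X (Sum.inr ()) : MvPolynomial (Fin p ⊕ Unit) k) - ∏ j, X (Sum.inl j) ^ Xv j with hρ
  have heρ : e ρ = 0 := by
    rw [hρ, ← hrm, map_sub, heid']
    simp [he]
  apply le_antisymm
  · intro f hf
    have hψf : φA (e f) = 0 := by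
      rw [← hcomp']
      exact hf
    have hg : rename (R := k) Sum.inl (e f) ∈
        Ideal.map (rename (R := k) (Sum.inl : Fin p → Fin p ⊕ Unit)) (toricIdeal k A) :=
      Ideal.mem_map_of_mem _ hψf
    have hfg : f - rename (R := k) Sum.inl (e f) ∈ Ideal.span {ρ} := by
      rw [← Ideal.Quotient.eq]
      have key : (Ideal.Quotient.mkₐ k (Ideal.span {ρ})).comp
          ((rename (R := k) (Sum.inl : Fin p → Fin p ⊕ Unit)).comp e) =
          Ideal.Quotient.mkₐ k (Ideal.span {ρ}) := by
        apply algHom_ext; intro j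
        cases j with
        | inl j => simp [he]
        | inr u =>
          simp only [AlgHom.comp_apply, he, aeval_X, Sum.elim_inr, hrm,
            Ideal.Quotient.mkₐ_eq_mk]
          rw [Ideal.Quotient.eq]
          exact neg_mem_iff.mp (by rw [neg_sub]; exact Ideal.subset_span rfl)
      have := DFunLike.congr_fun key f
      simpa using this.symm
    have hsplit : f = rename (R := k) Sum.inl (e f) +
        (f - rename (R := k) Sum.inl (e f)) := by ring
    rw [hsplit]
    exact add_mem (Ideal.mem_sup_left hg) (Ideal.mem_sup_right hfg)
  · apply sup_le
    · rw [Ideal.map_le_iff_le_comap]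
      intro f hf
      show ψ (rename Sum.inl f) = 0
      rw [hcomp', heid']
      exact hf
    · rw [Ideal.span_le, Set.singleton_subset_iff]
      show ψ ρ = 0
      rw [hcomp', heρ, map_zero]

/-- Simple split characterization: `⟨A⟩` and `⟨b⟩` can be glued if and only if some positive
multiple of `b` lies in `⟨A⟩`, i.e. `A·X = d·b` has a solution `X ∈ ℕ^p` for some `d > 0`. -/
theorem simple_split_glue_iff (k : Type) [Field k] {n p : ℕ}
    (A : Fin p → Fin n → ℕ) (b : Fin n → ℕ) (hb : b ≠ 0) :
    CanBeGluedSingle k A b ↔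
      ∃ d : ℕ, 0 < d ∧ ∃ Xv : Fin p → ℕ, ∀ i, ∑ j, Xv j * A j i = d * b i := by
  constructor
  · rintro ⟨k1, k2, hk1, hk2, d, α, hd, hα, heq⟩
    refine ⟨d * k2, Nat.mul_pos hd hk2, fun j => α j * k1, fun i => ?_⟩
    have hρ : (X (Sum.inr ()) ^ d : MvPolynomial (Fin p ⊕ Unit) k) -
        ∏ j, X (Sum.inl j) ^ α j ∈
        toricIdeal k (Sum.elim (fun j i => k1 * A j i) fun _ : Unit => fun i => k2 * b i) := by
      rw [heq]
      exact Ideal.mem_sup_right (Ideal.subset_span rfl)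
    have h0 : (aeval (R := k) fun j => ∏ i, (X i : MvPolynomial (Fin n) k) ^
        (Sum.elim (fun j i => k1 * A j i) (fun _ : Unit => fun i => k2 * b i)) j i)
        ((X (Sum.inr ()) ^ d : MvPolynomial (Fin p ⊕ Unit) k) -
          ∏ j, X (Sum.inl j) ^ α j) = 0 := hρ
    rw [map_sub, sub_eq_zero, map_pow, map_prod] at h0
    simp only [map_pow, aeval_X, Sum.elim_inl, Sum.elim_inr] at h0
    rw [prodXpow_pow, prod_prodXpow] at h0
    have hE := congrFun (prodXpow_inj k _ _ h0) i
    calc ∑ j, α j * k1 * A j i = ∑ j, α j * (k1 * A j i) := by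
          exact Finset.sum_congr rfl fun j _ => by ring
      _ = d * (k2 * b i) := hE.symm
      _ = d * k2 * b i := by ring
  · rintro ⟨d, hd, Xv, hXv⟩
    refine ⟨1, d, one_pos, hd, 1, Xv, one_pos, ?_, ?_⟩
    · intro h0
      apply hb
      funext i
      have h1 := hXv i
      rw [h0] at h1
      simp only [Pi.zero_apply, zero_mul, Finset.sum_const_zero] at h1
      exact ((Nat.mul_eq_zero.mp h1.symm).resolve_left hd.ne').symm ▸ rfl
    · have := glue_of_solution k (fun j i => 1 * A j i) (fun i => d * b i) Xv
        (fun i => by simp only [one_mul]; exact hXv i)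
      simpa [pow_one] using this
end

section
/- Let A = (a_1,…,a_p) ⊂ ℕ^n (also viewed as an n×p matrix) and b ∈ ℕ^n nonzero be such that some positive multiple of b lies in ⟨A⟩. Let d = d(A,b) be the smallest positive integer such that A·X = d·b has a solution X ∈ ℕ^p and s = s(A,b) the smallest positive integer such that A·X = s·b has a solution X ∈ ℤ^p, and assume d is squarefree. Then s divides d, so d = s·t for some positive integer t, and for all positive integers k_1, k_2 such that k_2 is a multiple of t, gcd(k_1,k_2) = 1 and gcd(k_1, gcd(b_1,…,b_n)) = 1, setting C = k_1A ∪ {k_2b}, the semigroup ⟨C⟩ is a gluing of ⟨A⟩ and ⟨b⟩. -/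
open MvPolynomial

noncomputable section SquarefreeGlueAux

variable {n : ℕ}

/-- Exponent of the monomial image of `x^u` under `x_j ↦ t^{w_j}`. -/
def expMapAux {τ : Type} [Fintype τ] (w : τ → Fin n → ℕ) (u : τ →₀ ℕ) : Fin n →₀ ℕ :=
  Finsupp.equivFunOnFinite.symm (fun i => ∑ j, u j * w j i)

lemma expMapAux_apply {τ : Type} [Fintype τ] (w : τ → Fin n → ℕ) (u : τ →₀ ℕ) (i : Fin n) :
    expMapAux w u i = ∑ j, u j * w j i := rfl

lemma prod_X_pow_eq (R : Type) [CommSemiring R] (g : Fin n → ℕ) :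
    (∏ i, (X i : MvPolynomial (Fin n) R) ^ g i) =
      monomial (Finsupp.equivFunOnFinite.symm g) 1 := by
  rw [monomial_eq, C_1, one_mul, Finsupp.prod_fintype _ _ (fun i => pow_zero _)]
  rfl

lemma prod_monomial_one (R : Type) [CommSemiring R] {σ τ : Type} (s : Finset τ)
    (f : τ → (σ →₀ ℕ)) :
    ∏ j ∈ s, (monomial (f j) (1 : R)) = monomial (∑ j ∈ s, f j) 1 := by
  classical
  induction s using Finset.induction with
  | empty => simp
  | insert _ _ h ih => rw [Finset.prod_insert h, Finset.sum_insert h, ih, monomial_mul, mul_one]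

lemma aeval_monomial_eq (k : Type) [Field k] {τ : Type} [Fintype τ]
    (w : τ → Fin n → ℕ) (u : τ →₀ ℕ) (c : k) :
    aeval (fun j => ∏ i, (X i : MvPolynomial (Fin n) k) ^ w j i) (monomial u c)
      = monomial (expMapAux w u) c := by
  rw [aeval_monomial, Finsupp.prod_fintype _ _ (fun j => pow_zero _)]
  have h1 : ∀ j : τ, (∏ i, (X i : MvPolynomial (Fin n) k) ^ w j i) ^ u j
      = ∏ i, X i ^ (u j * w j i) := by
    intro j
    rw [← Finset.prod_pow]
    refine Finset.prod_congr rfl fun i _ => ?_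
    rw [← pow_mul, mul_comm]
  simp_rw [h1]
  rw [Finset.prod_comm]
  simp_rw [Finset.prod_pow_eq_pow_sum]
  rw [prod_X_pow_eq, algebraMap_eq, C_mul_monomial, mul_one]
  rfl

lemma aeval_eq_sum (k : Type) [Field k] {τ : Type} [Fintype τ]
    (w : τ → Fin n → ℕ) (g : MvPolynomial τ k) :
    aeval (fun j => ∏ i, (X i : MvPolynomial (Fin n) k) ^ w j i) g
      = ∑ u ∈ g.support, monomial (expMapAux w u) (coeff u g) := by
  conv_lhs => rw [g.as_sum]
  rw [map_sum]
  exact Finset.sum_congr rfl fun u _ => aeval_monomial_eq k w u _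

lemma coeff_aeval (k : Type) [Field k] {τ : Type} [Fintype τ]
    (w : τ → Fin n → ℕ) (g : MvPolynomial τ k) (ν : Fin n →₀ ℕ) :
    coeff ν (aeval (fun j => ∏ i, (X i : MvPolynomial (Fin n) k) ^ w j i) g)
      = ∑ u ∈ g.support, if expMapAux w u = ν then coeff u g else 0 := by
  classical
  rw [aeval_eq_sum, coeff_sum]
  exact Finset.sum_congr rfl fun u _ => coeff_monomial ν _ _

lemma exists_expMapAux_of_mem_support (k : Type) [Field k] {τ : Type} [Fintype τ]
    (w : τ → Fin n → ℕ) (g : MvPolynomial τ k) (ν : Fin n →₀ ℕ)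
    (hν : ν ∈ (aeval (fun j => ∏ i, (X i : MvPolynomial (Fin n) k) ^ w j i) g).support) :
    ∃ u, expMapAux w u = ν := by
  classical
  rw [mem_support_iff, coeff_aeval] at hν
  by_contra hno
  push_neg at hno
  exact hν (Finset.sum_eq_zero fun u _ => if_neg (hno u))

end SquarefreeGlueAux

/-- The "s divides" lemma : the minimal positive `s` with an integer solution divides
every `m` with an integer solution. -/
lemma sdvd_aux {n p : ℕ} (A : Fin p → Fin n → ℕ) (b : Fin n → ℕ)
    (hne : {s : ℕ | 0 < s ∧
      ∃ Xv : Fin p → ℤ, ∀ i, ∑ j, Xv j * (A j i : ℤ) = (s : ℤ) * b i}.Nonempty)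
    (m : ℕ) (hm : ∃ Xv : Fin p → ℤ, ∀ i, ∑ j, Xv j * (A j i : ℤ) = (m : ℤ) * b i) :
    sInf {s : ℕ | 0 < s ∧
      ∃ Xv : Fin p → ℤ, ∀ i, ∑ j, Xv j * (A j i : ℤ) = (s : ℤ) * b i} ∣ m := by
  set S := {s : ℕ | 0 < s ∧
      ∃ Xv : Fin p → ℤ, ∀ i, ∑ j, Xv j * (A j i : ℤ) = (s : ℤ) * b i} with hS
  have hmem := Nat.sInf_mem hne
  set s := sInf S with hs
  obtain ⟨hspos, Xs, hXs⟩ := hmem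
  obtain ⟨Xm, hXm⟩ := hm
  by_cases h : m % s = 0
  · exact Nat.dvd_of_mod_eq_zero h
  · exfalso
    set q := m / s with hq
    set r := m % s with hr
    have hrs : (r : ℤ) = (m : ℤ) - s * q := by
      have hdm : s * q + r = m := Nat.div_add_mod m s
      have : ((s : ℤ) * q + r) = (m : ℤ) := by
        exact_mod_cast congrArg (fun x : ℕ => (x : ℤ)) hdm
      linarith
    have hrS : r ∈ S := by
      refine ⟨Nat.pos_of_ne_zero h, fun j => Xm j - q * Xs j, fun i => ?_⟩
      have hsplit : ∀ j, (Xm j - q * Xs j) * (A j i : ℤ)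
          = Xm j * A j i - q * (Xs j * A j i) := fun j => by ring
      simp_rw [hsplit]
      rw [Finset.sum_sub_distrib, ← Finset.mul_sum, hXm, hXs, hrs]
      ring
    have h1 : s ≤ r := Nat.sInf_le hrS
    have h2 : r < s := Nat.mod_lt _ hspos
    omega

lemma key_dvd_aux {n p : ℕ} (A : Fin p → Fin n → ℕ) (b : Fin n → ℕ)
    {s k1 k2 e : ℕ} (hk1 : 0 < k1) (hk2 : 0 < k2)
    (hsall : ∀ m : ℕ, (∃ Xv : Fin p → ℤ, ∀ i, ∑ j, Xv j * (A j i : ℤ) = (m : ℤ) * b i) → s ∣ m)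
    (hcop1 : Nat.Coprime k1 k2) (hcop2 : Nat.Coprime k1 (Finset.univ.gcd b))
    (he : e * k2 = Nat.lcm s k2)
    (u v : Fin p → ℕ) (m : ℕ)
    (h : ∀ i, k1 * (∑ j, u j * A j i) + m * (k2 * b i) = k1 * (∑ j, v j * A j i)) :
    (k1 * e) ∣ m := by
  have hd1 : ∀ i, k1 ∣ (m * k2) * b i := by
    intro i
    have hz := congrArg (fun x : ℕ => (x : ℤ)) (h i)
    push_cast at hz
    have hzd : (k1 : ℤ) ∣ (((m * k2) * b i : ℕ) : ℤ) := by
      refine ⟨(∑ j, (v j : ℤ) * A j i) - ∑ j, (u j : ℤ) * A j i, ?_⟩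
      push_cast
      linear_combination hz
    exact_mod_cast hzd
  have hd2 : k1 ∣ (m * k2) * Finset.univ.gcd b := by
    have : k1 ∣ Finset.univ.gcd (fun i => (m * k2) * b i) :=
      Finset.dvd_gcd fun i _ => hd1 i
    rwa [Finset.gcd_mul_left, normalize_eq] at this
  have hd3 : k1 ∣ m := by
    rw [mul_assoc] at hd2
    exact (hcop1.mul_right hcop2).dvd_of_dvd_mul_right hd2
  obtain ⟨m₁, rfl⟩ := hd3
  have hnat : ∀ i, (∑ j, u j * A j i) + m₁ * (k2 * b i) = ∑ j, v j * A j i := by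
    intro i
    refine Nat.eq_of_mul_eq_mul_left hk1 ?_
    rw [← h i]; ring
  have hsol : s ∣ m₁ * k2 := by
    refine hsall _ ⟨fun j => (v j : ℤ) - u j, fun i => ?_⟩
    have hz := congrArg (fun x : ℕ => (x : ℤ)) (hnat i)
    push_cast at hz ⊢
    simp_rw [sub_mul]
    rw [Finset.sum_sub_distrib]
    linarith
  have hlcm : Nat.lcm s k2 ∣ m₁ * k2 := Nat.lcm_dvd hsol ⟨m₁, mul_comm _ _⟩
  rw [← he] at hlcm
  exact mul_dvd_mul_left k1 ((Nat.mul_dvd_mul_iff_right hk2).mp hlcm)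

/-- symmetric version of the key divisibility over `ℤ` -/
lemma key_dvd_aux' {n p : ℕ} (A : Fin p → Fin n → ℕ) (b : Fin n → ℕ)
    {k1 e k2 : ℕ}
    (keyhyp : ∀ (u v : Fin p → ℕ) (m : ℕ),
      (∀ i, k1 * (∑ j, u j * A j i) + m * (k2 * b i) = k1 * (∑ j, v j * A j i)) → (k1 * e) ∣ m)
    (u v : Fin p → ℕ) (c c' : ℕ)
    (h : ∀ i, k1 * (∑ j, u j * A j i) + c * (k2 * b i)
        = k1 * (∑ j, v j * A j i) + c' * (k2 * b i)) :
    ((k1 * e : ℕ) : ℤ) ∣ (c : ℤ) - (c' : ℤ) := by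
  rcases le_total c' c with hle | hle
  · obtain ⟨m, rfl⟩ : ∃ m, c = c' + m := ⟨c - c', by omega⟩
    have h2 : ∀ i, k1 * (∑ j, u j * A j i) + m * (k2 * b i) = k1 * (∑ j, v j * A j i) := by
      intro i
      have h3 := h i
      zify at h3 ⊢
      linarith
    have := keyhyp u v m h2
    have : ((k1 * e : ℕ) : ℤ) ∣ (m : ℤ) := Int.natCast_dvd_natCast.mpr this
    convert this using 1
    push_cast; ring
  · obtain ⟨m, rfl⟩ : ∃ m, c' = c + m := ⟨c' - c, by omega⟩
    have h2 : ∀ i, k1 * (∑ j, v j * A j i) + m * (k2 * b i) = k1 * (∑ j, u j * A j i) := by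
      intro i
      have h3 := h i
      zify at h3 ⊢
      linarith
    have := keyhyp v u m h2
    have h4 : ((k1 * e : ℕ) : ℤ) ∣ (m : ℤ) := Int.natCast_dvd_natCast.mpr this
    have : (c : ℤ) - (c + m : ℕ) = -(m : ℤ) := by push_cast; ring
    rw [this]
    exact h4.neg_right

lemma gluing_main (k : Type) [Field k] {n p : ℕ}
    (A : Fin p → Fin n → ℕ) (b : Fin n → ℕ)
    {k1 k2 e w d : ℕ} (hke : 0 < k1 * e)
    (Xd : Fin p → ℕ) (hXd : ∀ i, ∑ j, Xd j * A j i = d * b i)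
    (hwd : w * d = e * k2)
    (keyhyp : ∀ (u v : Fin p → ℕ) (m : ℕ),
      (∀ i, k1 * (∑ j, u j * A j i) + m * (k2 * b i) = k1 * (∑ j, v j * A j i)) →
        (k1 * e) ∣ m) :
    toricIdeal k (Sum.elim (fun j i => k1 * A j i) fun _ : Unit => (fun i => k2 * b i)) =
      Ideal.map (rename Sum.inl) (toricIdeal k (fun j i => k1 * A j i)) ⊔
      Ideal.span {(X (Sum.inr ()) ^ (k1 * e) : MvPolynomial (Fin p ⊕ Unit) k) -
        ∏ j, X (Sum.inl j) ^ (w * Xd j)} := by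
  classical
  set Φ : MvPolynomial (Fin p ⊕ Unit) k →ₐ[k] MvPolynomial (Fin n) k :=
    aeval (R := k) (fun j : Fin p ⊕ Unit => ∏ i, (X i : MvPolynomial (Fin n) k) ^
      (Sum.elim (fun j i => k1 * A j i) (fun _ : Unit => fun i => k2 * b i) j i)) with hΦ
  set Φ' : MvPolynomial (Fin p) k →ₐ[k] MvPolynomial (Fin n) k :=
    aeval (R := k) (fun j : Fin p => ∏ i, (X i : MvPolynomial (Fin n) k) ^ (k1 * A j i))
      with hΦ'
  set ρ : MvPolynomial (Fin p ⊕ Unit) k :=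
    X (Sum.inr ()) ^ (k1 * e) - ∏ j, X (Sum.inl j) ^ (w * Xd j) with hρdef
  set K : Fin n →₀ ℕ := Finsupp.equivFunOnFinite.symm (fun i => k2 * b i) with hKdef
  have hKi : ∀ i, K i = k2 * b i := fun i => rfl
  -- Φ on renamed polynomials
  have hφCinl : ∀ g : MvPolynomial (Fin p) k, Φ (rename Sum.inl g) = Φ' g := by
    intro g
    rw [hΦ, aeval_rename]
    rfl
  -- Φ of the extra variable
  have h7 : Φ (X (Sum.inr ())) = monomial K (1 : k) := by
    rw [hΦ, aeval_X]
    exact prod_X_pow_eq k (fun i => k2 * b i)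
  -- ρ is in the kernel
  have hρmem : Φ ρ = 0 := by
    rw [hρdef, map_sub, map_pow, h7, map_prod]
    have hstep : ∏ x : Fin p, Φ (MvPolynomial.X (Sum.inl x) ^ (w * Xd x))
        = ∏ x : Fin p, (monomial
            ((w * Xd x) • Finsupp.equivFunOnFinite.symm fun i => k1 * A x i)) (1 : k) := by
      refine Finset.prod_congr rfl fun x _ => ?_
      rw [map_pow, hΦ, aeval_X]
      rw [show (∏ i, (X i : MvPolynomial (Fin n) k) ^
          (Sum.elim (fun j i => k1 * A j i) (fun _ : Unit => fun i => k2 * b i) (Sum.inl x) i))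
          = monomial (Finsupp.equivFunOnFinite.symm fun i => k1 * A x i) (1 : k)
          from prod_X_pow_eq k (fun i => k1 * A x i)]
      rw [monomial_pow, one_pow]
    rw [hstep, prod_monomial_one, monomial_pow, one_pow, sub_eq_zero]
    have hexp : ((k1 * e) • K)
        = ∑ j, (w * Xd j) • Finsupp.equivFunOnFinite.symm fun i => k1 * A j i := by
      ext i
      rw [Finsupp.smul_apply, Finset.sum_apply']
      rw [smul_eq_mul, hKi]
      have hterm : ∀ j : Fin p,
          ((w * Xd j) • Finsupp.equivFunOnFinite.symm fun i => k1 * A j i) i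
            = (w * Xd j) * (k1 * A j i) :=
        fun j => by rw [Finsupp.smul_apply, smul_eq_mul]; rfl
      rw [Finset.sum_congr rfl fun j _ => hterm j]
      have hsum : ∑ j, (w * Xd j) * (k1 * A j i) = (k1 * w) * ∑ j, Xd j * A j i := by
        rw [Finset.mul_sum]
        exact Finset.sum_congr rfl fun j _ => by ring
      rw [hsum, hXd i]
      have h1 : k1 * w * (d * b i) = k1 * ((w * d) * b i) := by ring
      rw [h1, hwd]
      ring
    rw [hexp]
  -- the equivalence with polynomials in y
  set E : MvPolynomial (Fin p ⊕ Unit) k ≃ₐ[k] Polynomial (MvPolynomial (Fin p) k) :=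
    (renameEquiv k ((Equiv.optionEquivSumPUnit (Fin p)).symm)).trans
      (optionEquivLeft k (Fin p)) with hE
  have hEX : E (X (Sum.inr ())) = Polynomial.X := by
    rw [hE]
    simp only [AlgEquiv.trans_apply, renameEquiv_apply, rename_X]
    rw [Equiv.optionEquivSumPUnit_symm_inr, optionEquivLeft_X_none]
  have hEinl : ∀ g : MvPolynomial (Fin p) k, E (rename Sum.inl g) = Polynomial.C g := by
    have hhom : (↑(E.toAlgHom.comp (rename (R := k) (Sum.inl : Fin p → Fin p ⊕ Unit))) :
        MvPolynomial (Fin p) k →+* Polynomial (MvPolynomial (Fin p) k)) = Polynomial.C := by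
      apply MvPolynomial.ringHom_ext
      · intro r
        simp only [RingHom.coe_coe, AlgHom.coe_comp, Function.comp_apply, rename_C, hE,
          AlgEquiv.toAlgHom_eq_coe, AlgHom.coe_coe, AlgEquiv.coe_toAlgHom, AlgEquiv.trans_apply, renameEquiv_apply,
          optionEquivLeft_C]
      · intro j
        simp only [RingHom.coe_coe, AlgHom.coe_comp, Function.comp_apply, rename_X, hE,
          AlgEquiv.toAlgHom_eq_coe, AlgHom.coe_coe, AlgEquiv.coe_toAlgHom, AlgEquiv.trans_apply, renameEquiv_apply,
          Equiv.optionEquivSumPUnit_symm_inl, optionEquivLeft_X_some]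
    intro g
    exact DFunLike.congr_fun hhom g
  set P : MvPolynomial (Fin p) k := ∏ j, (X j : MvPolynomial (Fin p) k) ^ (w * Xd j) with hP
  set ρ' : Polynomial (MvPolynomial (Fin p) k) :=
    Polynomial.X ^ (k1 * e) - Polynomial.C P with hρ'
  have hEρ : E ρ = ρ' := by
    rw [hρdef, map_sub, map_pow, hEX]
    have hprod : (∏ j, (X (Sum.inl j) : MvPolynomial (Fin p ⊕ Unit) k) ^ (w * Xd j))
        = rename Sum.inl P := by
      rw [hP, map_prod]
      simp_rw [map_pow, rename_X]
    rw [hprod, hEinl]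
  have hmonic : ρ'.Monic := Polynomial.monic_X_pow_sub_C P hke.ne'
  have hdeg : ρ'.degree = ((k1 * e : ℕ) : WithBot ℕ) := Polynomial.degree_X_pow_sub_C hke P
  apply le_antisymm
  · -- hard direction
    intro f hf
    have hfΦ : Φ f = 0 := by
      simpa only [toricIdeal, RingHom.mem_ker] using hf
    set r := (E f) %ₘ ρ' with hr
    set q := (E f) /ₘ ρ' with hq
    have hfd : f = E.symm r + ρ * E.symm q := by
      apply E.injective
      rw [map_add, map_mul, AlgEquiv.apply_symm_apply, AlgEquiv.apply_symm_apply, hEρ]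
      exact (Polynomial.modByMonic_add_div (E f) ρ').symm
    have hEr0 : Φ (E.symm r) = 0 := by
      have h5 := hfΦ
      rw [hfd, map_add, map_mul, hρmem, zero_mul, add_zero] at h5
      exact h5
    have hcb : ∀ c ∈ r.support, c < k1 * e := by
      intro c hc
      by_contra hge
      push_neg at hge
      have hlt : r.degree < (c : WithBot ℕ) := by
        refine lt_of_lt_of_le (Polynomial.degree_modByMonic_lt (E f) hmonic) ?_
        rw [hdeg]
        exact_mod_cast hge
      exact Polynomial.mem_support_iff.mp hc (Polynomial.coeff_eq_zero_of_degree_lt hlt)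
    have hEsr : E.symm r = ∑ c ∈ r.support,
        rename Sum.inl (r.coeff c) * X (Sum.inr ()) ^ c := by
      apply E.injective
      rw [AlgEquiv.apply_symm_apply, map_sum]
      conv_lhs => rw [← Polynomial.sum_C_mul_X_pow_eq r]
      rw [Polynomial.sum_def]
      refine Finset.sum_congr rfl fun c _ => ?_
      rw [map_mul, map_pow, hEinl, hEX]
    have h0 : ∑ c ∈ r.support, (Φ' (r.coeff c)) * (monomial (c • K) (1 : k)) = 0 := by
      rw [hEsr, map_sum] at hEr0
      rw [← hEr0]
      refine Finset.sum_congr rfl fun c _ => ?_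
      rw [map_mul, map_pow, hφCinl, h7, monomial_pow, one_pow]
    have hker : ∀ c ∈ r.support, Φ' (r.coeff c) = 0 := by
      intro c₀ hc₀
      by_contra hne0
      have hsupp : (Φ' (r.coeff c₀)).support.Nonempty := by
        rw [Finset.nonempty_iff_ne_empty, Ne, MvPolynomial.support_eq_empty]
        exact hne0
      obtain ⟨ν₀, hν₀⟩ := hsupp
      obtain ⟨u₀, hu₀⟩ := exists_expMapAux_of_mem_support k _ _ ν₀ hν₀
      set ν : Fin n →₀ ℕ := ν₀ + c₀ • K with hν
      have h8 := congrArg (coeff ν) h0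
      rw [coeff_sum, coeff_zero] at h8
      have hside1 : ∀ c ∈ r.support, c ≠ c₀ →
          coeff ν ((Φ' (r.coeff c)) * (monomial (c • K) (1 : k))) = 0 := by
        intro c hc hcne
        rw [coeff_mul_monomial']
        split_ifs with hle
        · rw [mul_one]
          by_contra hne2
          have hmem2 : ν - c • K ∈ (Φ' (r.coeff c)).support := mem_support_iff.mpr hne2
          obtain ⟨u₁, hu₁⟩ := exists_expMapAux_of_mem_support k _ _ _ hmem2
          have hadd : expMapAux (fun j i => k1 * A j i) u₁ + c • K
              = expMapAux (fun j i => k1 * A j i) u₀ + c₀ • K := by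
            rw [hu₁, hu₀, tsub_add_cancel_of_le hle]
          have hpt : ∀ i, k1 * (∑ j, u₁ j * A j i) + c * (k2 * b i)
              = k1 * (∑ j, u₀ j * A j i) + c₀ * (k2 * b i) := by
            intro i
            have h9 := DFunLike.congr_fun hadd i
            simp only [Finsupp.add_apply, Finsupp.smul_apply, smul_eq_mul,
              expMapAux_apply] at h9
            rw [hKi] at h9
            have hs1 : ∑ j, u₁ j * (k1 * A j i) = k1 * ∑ j, u₁ j * A j i := by
              rw [Finset.mul_sum]
              exact Finset.sum_congr rfl fun j _ => by ring
            have hs2 : ∑ j, u₀ j * (k1 * A j i) = k1 * ∑ j, u₀ j * A j i := by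
              rw [Finset.mul_sum]
              exact Finset.sum_congr rfl fun j _ => by ring
            rw [hs1, hs2] at h9
            exact h9
          have hdvd := key_dvd_aux' A b keyhyp (fun j => u₁ j) (fun j => u₀ j) c c₀ hpt
          have habs : (c : ℤ) - c₀ ≠ 0 := sub_ne_zero.mpr (by exact_mod_cast hcne)
          have hbound : |(c : ℤ) - c₀| < ((k1 * e : ℕ) : ℤ) := by
            rw [abs_sub_lt_iff]
            constructor
            · refine lt_of_le_of_lt (sub_le_self _ (by positivity)) ?_
              exact_mod_cast hcb c hc
            · refine lt_of_le_of_lt (sub_le_self _ (by positivity)) ?_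
              exact_mod_cast hcb c₀ hc₀
          exact habs (Int.eq_zero_of_abs_lt_dvd hdvd hbound)
        · rfl
      have hside2 : c₀ ∉ r.support →
          coeff ν ((Φ' (r.coeff c₀)) * (monomial (c₀ • K) (1 : k))) = 0 :=
        fun hcc => absurd hc₀ hcc
      rw [Finset.sum_eq_single c₀ hside1 hside2] at h8
      rw [coeff_mul_monomial', if_pos (le_add_self : c₀ • K ≤ ν₀ + c₀ • K),
        add_tsub_cancel_right, mul_one] at h8
      exact (mem_support_iff.mp hν₀) h8
    have hmap : E.symm r ∈ Ideal.map (rename (R := k) Sum.inl)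
        (toricIdeal k (fun j i => k1 * A j i)) := by
      rw [hEsr]
      refine Ideal.sum_mem _ fun c hc => Ideal.mul_mem_right _ _ (Ideal.mem_map_of_mem _ ?_)
      show r.coeff c ∈ toricIdeal k (fun j i => k1 * A j i)
      simp only [toricIdeal, RingHom.mem_ker]
      exact hker c hc
    rw [hfd]
    exact Submodule.add_mem _ (Ideal.mem_sup_left hmap)
      (Ideal.mem_sup_right (Ideal.mem_span_singleton.mpr (dvd_mul_right ρ (E.symm q))))
  · -- easy direction
    refine sup_le ?_ ?_
    · rw [Ideal.map_le_iff_le_comap]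
      intro g hg
      simp only [toricIdeal, RingHom.mem_ker] at hg
      simp only [toricIdeal, Ideal.mem_comap, RingHom.mem_ker]
      rw [show (aeval (R := k) fun j => ∏ i, (X i : MvPolynomial (Fin n) k) ^
        (Sum.elim (fun j i => k1 * A j i) (fun _ : Unit => fun i => k2 * b i)) j i)
          ((rename Sum.inl) g) = Φ (rename Sum.inl g) from rfl, hφCinl]
      exact hg
    · rw [Ideal.span_le, Set.singleton_subset_iff]
      simp only [SetLike.mem_coe, toricIdeal, RingHom.mem_ker]
      exact hρmem

/-- Squarefree case: with `d = d(A,b)` (smallest `d > 0` with `A·X = d·b` solvable over `ℕ`)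
and `s = s(A,b)` (smallest `s > 0` with `A·X = s·b` solvable over `ℤ`), if `d` is squarefree
then `s ∣ d`, say `d = s·t`, and for all positive `k₁, k₂` with `t ∣ k₂`, `gcd(k₁,k₂) = 1`
and `gcd(k₁, gcd(b₁,…,b_n)) = 1`, the semigroup `⟨k₁A ∪ {k₂b}⟩` is a gluing of `⟨A⟩`
and `⟨b⟩`. -/
theorem squarefree_glue (k : Type) [Field k] {n p : ℕ}
    (A : Fin p → Fin n → ℕ) (b : Fin n → ℕ) (hb : b ≠ 0)
    (hmult : ∃ d : ℕ, 0 < d ∧ ∃ Xv : Fin p → ℕ, ∀ i, ∑ j, Xv j * A j i = d * b i)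
    (hsq : Squarefree
      (sInf {d : ℕ | 0 < d ∧ ∃ Xv : Fin p → ℕ, ∀ i, ∑ j, Xv j * A j i = d * b i})) :
    sInf {s : ℕ | 0 < s ∧ ∃ Xv : Fin p → ℤ, ∀ i, ∑ j, Xv j * (A j i : ℤ) = (s : ℤ) * b i} ∣
      sInf {d : ℕ | 0 < d ∧ ∃ Xv : Fin p → ℕ, ∀ i, ∑ j, Xv j * A j i = d * b i} ∧
    ∀ k1 k2 : ℕ, 0 < k1 → 0 < k2 →
      (sInf {d : ℕ | 0 < d ∧ ∃ Xv : Fin p → ℕ, ∀ i, ∑ j, Xv j * A j i = d * b i} /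
        sInf {s : ℕ | 0 < s ∧
          ∃ Xv : Fin p → ℤ, ∀ i, ∑ j, Xv j * (A j i : ℤ) = (s : ℤ) * b i}) ∣ k2 →
      Nat.Coprime k1 k2 → Nat.Coprime k1 (Finset.univ.gcd b) →
      IsGluingSingle k (fun j i => k1 * A j i) (fun i => k2 * b i) := by
  obtain ⟨d₀, hd₀pos, Xv₀, hXv₀⟩ := hmult
  set Dset := {d : ℕ | 0 < d ∧ ∃ Xv : Fin p → ℕ, ∀ i, ∑ j, Xv j * A j i = d * b i} with hDset
  set Sset := {s : ℕ | 0 < s ∧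
      ∃ Xv : Fin p → ℤ, ∀ i, ∑ j, Xv j * (A j i : ℤ) = (s : ℤ) * b i} with hSset
  have hDne : Dset.Nonempty := ⟨d₀, hd₀pos, Xv₀, hXv₀⟩
  set d := sInf Dset with hd
  obtain ⟨hdpos, Xd, hXd⟩ : 0 < d ∧ ∃ Xv : Fin p → ℕ, ∀ i, ∑ j, Xv j * A j i = d * b i :=
    Nat.sInf_mem hDne
  have hdZ : ∃ Xv : Fin p → ℤ, ∀ i, ∑ j, Xv j * (A j i : ℤ) = (d : ℤ) * b i := by
    refine ⟨fun j => (Xd j : ℤ), fun i => ?_⟩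
    have h1 := congrArg (fun x : ℕ => (x : ℤ)) (hXd i)
    push_cast at h1
    exact h1
  have hSne : Sset.Nonempty := ⟨d, hdpos, hdZ⟩
  set s := sInf Sset with hs
  obtain ⟨hspos, -⟩ : 0 < s ∧ ∃ Xv : Fin p → ℤ, ∀ i, ∑ j, Xv j * (A j i : ℤ) = (s : ℤ) * b i :=
    Nat.sInf_mem hSne
  have hsall : ∀ m : ℕ,
      (∃ Xv : Fin p → ℤ, ∀ i, ∑ j, Xv j * (A j i : ℤ) = (m : ℤ) * b i) → s ∣ m :=
    fun m hm => sdvd_aux A b hSne m hm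
  have hsd : s ∣ d := hsall d hdZ
  refine ⟨hsd, ?_⟩
  intro k1 k2 hk1 hk2 ht hcop1 hcop2
  have hst : s * (d / s) = d := Nat.mul_div_cancel' hsd
  have hcopst : Nat.Coprime s (d / s) := by
    have hdvd2 : (Nat.gcd s (d / s)) * (Nat.gcd s (d / s)) ∣ d := by
      calc (Nat.gcd s (d / s)) * (Nat.gcd s (d / s)) ∣ s * (d / s) :=
            mul_dvd_mul (Nat.gcd_dvd_left _ _) (Nat.gcd_dvd_right _ _)
        _ = d := hst
    exact Nat.isUnit_iff.mp (hsq _ hdvd2)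
  set L := Nat.lcm s k2 with hL
  have hLpos : 0 < L := Nat.pos_of_ne_zero (Nat.lcm_ne_zero hspos.ne' hk2.ne')
  have hdL : d ∣ L := by
    rw [← hst]
    exact Nat.Coprime.mul_dvd_of_dvd_of_dvd hcopst (Nat.dvd_lcm_left s k2)
      (dvd_trans ht (Nat.dvd_lcm_right s k2))
  set e := L / k2 with he
  have hek2 : e * k2 = L := Nat.div_mul_cancel (Nat.dvd_lcm_right s k2)
  have hepos : 0 < e := by
    rcases Nat.eq_zero_or_pos e with h0 | h
    · rw [h0, zero_mul] at hek2
      omega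
    · exact h
  set w := L / d with hw
  have hwd : w * d = e * k2 := by rw [hek2]; exact Nat.div_mul_cancel hdL
  have hwpos : 0 < w := by
    rcases Nat.eq_zero_or_pos w with h0 | h
    · rw [h0, zero_mul] at hwd
      omega
    · exact h
  have keyhyp : ∀ (u v : Fin p → ℕ) (m : ℕ),
      (∀ i, k1 * (∑ j, u j * A j i) + m * (k2 * b i) = k1 * (∑ j, v j * A j i)) →
        (k1 * e) ∣ m :=
    fun u v m h => key_dvd_aux A b hk1 hk2 hsall hcop1 hcop2 hek2 u v m h
  obtain ⟨i₀, hbi⟩ : ∃ i, b i ≠ 0 := by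
    by_contra hno
    push_neg at hno
    exact hb (funext hno)
  obtain ⟨j₀, hj₀⟩ : ∃ j, Xd j ≠ 0 := by
    by_contra hno
    push_neg at hno
    have h1 := hXd i₀
    rw [Finset.sum_eq_zero (fun j _ => by rw [hno j, zero_mul])] at h1
    have := Nat.mul_eq_zero.mp h1.symm
    omega
  unfold IsGluingSingle
  refine ⟨k1 * e, fun j => w * Xd j, by positivity, ?_, ?_⟩
  · intro hα
    have h2 := congrFun hα j₀
    simp only [Pi.zero_apply] at h2
    rcases Nat.mul_eq_zero.mp h2 with h3 | h3
    · omega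
    · exact hj₀ h3
  · exact gluing_main k A b (by positivity) Xd hXd hwd keyhyp
end

section
/- Let A = (a_1,…,a_p) ⊂ ℕ^n and let b ∈ ℕ^n be nonzero with gcd(b_1,…,b_n) = 1 and b ∈ ⟨A⟩, say b = Σ_{j=1}^p d_j a_j with d_j ∈ ℕ. Let u_1,…,u_q be positive integers with q ≥ 2 and set B = (u_1b,…,u_qb). Let k_1, k_2 be positive integers with gcd(k_1,k_2) = 1 and k_1 ∈ ⟨u_1,…,u_q⟩, say k_1 = Σ_{j=1}^q v_j u_j with v_j ∈ ℕ. Then for C = k_1A ∪ k_2B one has I_C = I_A + I_B + ⟨ρ⟩ where ρ = ∏_{j=1}^q y_j^{v_j} − ∏_{j=1}^p x_j^{d_j k_2}; in particular ⟨C⟩ is a gluing of ⟨A⟩ and ⟨B⟩. -/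
open MvPolynomial

namespace GlueAux

variable {k : Type} [Field k]

lemma prod_monomial {τ σ : Type} (s : Finset τ) (h : τ → (σ →₀ ℕ)) :
    ∏ i ∈ s, (monomial (h i) (1:k)) = monomial (∑ i ∈ s, h i) 1 := by
  induction s using Finset.cons_induction with
  | empty => simp
  | cons a s ha ih => rw [Finset.prod_cons, ih, Finset.sum_cons, monomial_mul, one_mul]

lemma prod_X_pow_s12 {τ σ : Type} [Fintype τ] (g : τ → σ) (w : τ → ℕ) :
    (∏ j, (X (g j) : MvPolynomial σ k) ^ w j) = monomial (∑ j, Finsupp.single (g j) (w j)) 1 := by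
  simp_rw [X_pow_eq_monomial]; rw [prod_monomial]

lemma prod_X_pow_univ {n : ℕ} (c : Fin n → ℕ) :
    (∏ i, (X i : MvPolynomial (Fin n) k) ^ c i) = monomial (Finsupp.equivFunOnFinite.symm c) 1 := by
  simp_rw [X_pow_eq_monomial]
  rw [prod_monomial]
  have h : (∑ i, Finsupp.single i (c i)) = Finsupp.equivFunOnFinite.symm c := by
    ext i
    simp [Finsupp.single_apply, Finsupp.finset_sum_apply]
  rw [h]

/-- the exponent weight of a monomial under the toric map -/
noncomputable def W {τ : Type} [Fintype τ] {n : ℕ} (F : τ → Fin n → ℕ) (e : τ →₀ ℕ) :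
    Fin n →₀ ℕ :=
  Finsupp.equivFunOnFinite.symm (fun i => ∑ j, e j * F j i)

lemma aeval_monomial_toric {τ : Type} [Fintype τ] {n : ℕ} (F : τ → Fin n → ℕ) (e : τ →₀ ℕ)
    (c : k) :
    aeval (R := k) (fun j => ∏ i, (X i : MvPolynomial (Fin n) k) ^ F j i) (monomial e c)
      = monomial (W F e) c := by
  rw [aeval_monomial]
  rw [Finsupp.prod_fintype _ _ (fun j => pow_zero _)]
  simp_rw [prod_X_pow_univ, monomial_pow, one_pow]
  rw [prod_monomial, algebraMap_eq, C_mul_monomial, mul_one]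
  have hexp : (∑ j, e j • Finsupp.equivFunOnFinite.symm (F j)) = W F e := by
    ext i
    simp [W, Finsupp.finset_sum_apply]
  rw [hexp]

lemma binomial_mem_toricIdeal {τ : Type} [Fintype τ] {n : ℕ} (F : τ → Fin n → ℕ)
    (e0 e1 : τ →₀ ℕ) (c : k) (h : ∀ i, ∑ j, e0 j * F j i = ∑ j, e1 j * F j i) :
    (monomial e0 c - monomial e1 c : MvPolynomial τ k) ∈ toricIdeal k F := by
  have hW : W F e0 = W F e1 := by
    unfold W; congr 1; funext i; exact h i
  simp only [toricIdeal, RingHom.mem_ker, map_sub, aeval_monomial_toric, hW, sub_self]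

end GlueAux

namespace GlueAux

variable {k : Type} [Field k]

lemma toricIdeal_le {τ : Type} [Fintype τ] {n : ℕ} (F : τ → Fin n → ℕ)
    (I : Ideal (MvPolynomial τ k))
    (hBin : ∀ e0 e1 : τ →₀ ℕ, (∀ i, ∑ j, e0 j * F j i = ∑ j, e1 j * F j i) →
      (monomial e0 (1:k) - monomial e1 1) ∈ I) :
    toricIdeal k F ≤ I := by
  suffices H : ∀ N (f : MvPolynomial τ k), f.support.card ≤ N → f ∈ toricIdeal k F → f ∈ I by
    intro f hf; exact H f.support.card f le_rfl hf
  intro N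
  induction N with
  | zero =>
    intro f hcard _
    have : f = 0 := by
      rw [← MvPolynomial.support_eq_empty]
      exact Finset.card_eq_zero.mp (Nat.le_zero.mp hcard)
    simp [this]
  | succ N ih =>
    intro f hcard hf
    classical
    by_cases h0 : f = 0
    · simp [h0]
    obtain ⟨e0, he0⟩ := (MvPolynomial.support_nonempty.mpr h0)
    have hker : aeval (R := k) (fun j => ∏ i, (X i : MvPolynomial (Fin n) k) ^ F j i) f = 0 := hf
    have himg : aeval (R := k) (fun j => ∏ i, (X i : MvPolynomial (Fin n) k) ^ F j i) f
        = ∑ e ∈ f.support, monomial (W F e) (coeff e f) := by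
      conv_lhs => rw [f.as_sum]
      rw [map_sum]
      simp_rw [aeval_monomial_toric]
    have hsum : (∑ e ∈ f.support, if W F e = W F e0 then coeff e f else 0) = 0 := by
      have h1 := congrArg (coeff (W F e0)) himg
      rw [hker] at h1
      simpa [MvPolynomial.coeff_sum, MvPolynomial.coeff_monomial] using h1.symm
    have hex : ∃ e1 ∈ f.support, e1 ≠ e0 ∧ W F e1 = W F e0 := by
      by_contra hcon
      push_neg at hcon
      have heq : (∑ e ∈ f.support, if W F e = W F e0 then coeff e f else 0) = coeff e0 f := by
        rw [Finset.sum_eq_single_of_mem e0 he0]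
        · simp
        · intro e he hne
          rw [if_neg (hcon e he hne)]
      exact MvPolynomial.mem_support_iff.mp he0 (by rw [← heq, hsum])
    obtain ⟨e1, he1s, he1ne, hWe⟩ := hex
    have hw : ∀ i, ∑ j, e0 j * F j i = ∑ j, e1 j * F j i := by
      intro i
      have h2 := congrArg (fun w => w i) hWe
      simpa [W] using h2.symm
    set c := coeff e0 f with hc
    have hbin_toric : (monomial e0 c - monomial e1 c) ∈ toricIdeal k F :=
      binomial_mem_toricIdeal F e0 e1 c hw
    have hbinI : (monomial e0 c - monomial e1 c) ∈ I := by
      have hmem := hBin e0 e1 hw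
      have h2 : (monomial e0 c - monomial e1 c : MvPolynomial τ k)
          = C c * (monomial e0 1 - monomial e1 1) := by
        rw [mul_sub, C_mul_monomial, C_mul_monomial, mul_one]
      rw [h2]
      exact Ideal.mul_mem_left _ _ hmem
    set f' := f - (monomial e0 c - monomial e1 c) with hf'def
    have hf'ker : f' ∈ toricIdeal k F := sub_mem hf hbin_toric
    have hcoeff : ∀ e, coeff e f' =
        coeff e f - (if e0 = e then c else 0) + (if e1 = e then c else 0) := by
      intro e
      simp only [hf'def, coeff_sub, coeff_monomial]
      ring
    have hsubset : f'.support ⊆ f.support.erase e0 := by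
      intro e he
      have hce : coeff e f' ≠ 0 := MvPolynomial.mem_support_iff.mp he
      have hne0 : e ≠ e0 := by
        rintro rfl
        apply hce
        rw [hcoeff, if_pos rfl, if_neg he1ne]
        simp [hc]
      rw [Finset.mem_erase]
      refine ⟨hne0, ?_⟩
      by_cases he1 : e = e1
      · rw [he1]; exact he1s
      · by_contra hnot
        apply hce
        rw [hcoeff, MvPolynomial.notMem_support_iff.mp hnot,
          if_neg (fun h => hne0 h.symm), if_neg (fun h => he1 h.symm)]
        simp
    have hcard' : f'.support.card ≤ N := by
      have h3 := Finset.card_le_card hsubset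
      rw [Finset.card_erase_of_mem he0] at h3
      omega
    have hf'I : f' ∈ I := ih f' hcard' hf'ker
    have hfeq : f = f' + (monomial e0 c - monomial e1 c) := by
      rw [hf'def]; ring
    rw [hfeq]
    exact add_mem hf'I hbinI

end GlueAux

namespace GlueAux

section Embed

variable {p q : ℕ}

/-- embed a `Fin p`-tuple of exponents into `Fin p ⊕ Fin q` (left). -/
noncomputable def embedL (w : Fin p → ℕ) : (Fin p ⊕ Fin q) →₀ ℕ :=
  ∑ j, Finsupp.single (Sum.inl j) (w j)

/-- embed a `Fin q`-tuple of exponents into `Fin p ⊕ Fin q` (right). -/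
noncomputable def embedR (w : Fin q → ℕ) : (Fin p ⊕ Fin q) →₀ ℕ :=
  ∑ j, Finsupp.single (Sum.inr j) (w j)

@[simp] lemma embedL_apply_inl (w : Fin p → ℕ) (j : Fin p) :
    (embedL (q := q) w) (Sum.inl j) = w j := by
  classical
  simp [embedL, Finsupp.finset_sum_apply, Finsupp.single_apply]

@[simp] lemma embedL_apply_inr (w : Fin p → ℕ) (j : Fin q) :
    (embedL (q := q) w) (Sum.inr j) = 0 := by
  classical
  simp [embedL, Finsupp.finset_sum_apply, Finsupp.single_apply]

@[simp] lemma embedR_apply_inl (w : Fin q → ℕ) (j : Fin p) :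
    (embedR (p := p) w) (Sum.inl j) = 0 := by
  classical
  simp [embedR, Finsupp.finset_sum_apply, Finsupp.single_apply]

@[simp] lemma embedR_apply_inr (w : Fin q → ℕ) (j : Fin q) :
    (embedR (p := p) w) (Sum.inr j) = w j := by
  classical
  simp [embedR, Finsupp.finset_sum_apply, Finsupp.single_apply]

lemma embedL_add (w w' : Fin p → ℕ) :
    embedL (q := q) (fun j => w j + w' j) = embedL w + embedL w' := by
  ext s
  cases s <;> simp

lemma embedR_add (w w' : Fin q → ℕ) :
    embedR (p := p) (fun j => w j + w' j) = embedR w + embedR w' := by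
  ext s
  cases s <;> simp

lemma smul_embedL (c : ℕ) (w : Fin p → ℕ) :
    c • embedL (q := q) w = embedL (fun j => c * w j) := by
  ext s
  cases s <;> simp

lemma smul_embedR (c : ℕ) (w : Fin q → ℕ) :
    c • embedR (p := p) w = embedR (fun j => c * w j) := by
  ext s
  cases s <;> simp

lemma embed_decomp (e : (Fin p ⊕ Fin q) →₀ ℕ) :
    e = embedL (fun j => e (Sum.inl j)) + embedR (fun j => e (Sum.inr j)) := by
  ext s
  cases s <;> simp

lemma mapDomain_inl (w : Fin p → ℕ) :
    Finsupp.mapDomain Sum.inl (Finsupp.equivFunOnFinite.symm w) = embedL (q := q) w := by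
  ext s
  cases s with
  | inl j =>
    rw [Finsupp.mapDomain_apply Sum.inl_injective]
    simp
  | inr j =>
    rw [Finsupp.mapDomain_notin_range]
    · simp
    · rintro ⟨j', hj'⟩
      exact Sum.inl_ne_inr hj'

lemma mapDomain_inr (w : Fin q → ℕ) :
    Finsupp.mapDomain Sum.inr (Finsupp.equivFunOnFinite.symm w) = embedR (p := p) w := by
  ext s
  cases s with
  | inl j =>
    rw [Finsupp.mapDomain_notin_range]
    · simp
    · rintro ⟨j', hj'⟩
      exact Sum.inr_ne_inl hj'
  | inr j =>
    rw [Finsupp.mapDomain_apply Sum.inr_injective]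
    simp

lemma rename_inl_binomial {k : Type} [Field k] (w w' : Fin p → ℕ) :
    rename (Sum.inl : Fin p → Fin p ⊕ Fin q)
        ((monomial (Finsupp.equivFunOnFinite.symm w) (1:k))
          - monomial (Finsupp.equivFunOnFinite.symm w') 1)
      = monomial (embedL w) 1 - monomial (embedL w') 1 := by
  rw [map_sub, rename_monomial, rename_monomial, mapDomain_inl, mapDomain_inl]

lemma rename_inr_binomial {k : Type} [Field k] (w w' : Fin q → ℕ) :
    rename (Sum.inr : Fin q → Fin p ⊕ Fin q)
        ((monomial (Finsupp.equivFunOnFinite.symm w) (1:k))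
          - monomial (Finsupp.equivFunOnFinite.symm w') 1)
      = monomial (embedR w) 1 - monomial (embedR w') 1 := by
  rw [map_sub, rename_monomial, rename_monomial, mapDomain_inr, mapDomain_inr]

end Embed

end GlueAux

namespace GlueAux

variable {k : Type} [Field k]

lemma key {n p q : ℕ}
    (A : Fin p → Fin n → ℕ) (b : Fin n → ℕ)
    (hgcdb : Finset.univ.gcd b = 1)
    (d : Fin p → ℕ) (hbA : ∀ i, b i = ∑ j, d j * A j i)
    (u : Fin q → ℕ)
    (k1 k2 : ℕ) (hk1 : 0 < k1) (hcop : Nat.Coprime k1 k2)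
    (v : Fin q → ℕ) (hk1u : k1 = ∑ j, v j * u j)
    (e0 e1 : (Fin p ⊕ Fin q) →₀ ℕ)
    (hw : ∀ i, ∑ s, e0 s * (Sum.elim (fun j i => k1 * A j i) (fun j i => k2 * (u j * b i)) s i)
             = ∑ s, e1 s * (Sum.elim (fun j i => k1 * A j i) (fun j i => k2 * (u j * b i)) s i))
    (horder : ∑ j, e0 (Sum.inr j) * u j ≤ ∑ j, e1 (Sum.inr j) * u j) :
    (monomial e0 (1:k) - monomial e1 1) ∈
      Ideal.map (rename Sum.inl) (toricIdeal k A) ⊔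
      Ideal.map (rename Sum.inr) (toricIdeal k (fun j i => u j * b i)) ⊔
      Ideal.span {(∏ j, X (Sum.inr j) ^ v j : MvPolynomial (Fin p ⊕ Fin q) k) -
        ∏ j, X (Sum.inl j) ^ (d j * k2)} := by
  -- split the weight sums
  have hsplit : ∀ (e : (Fin p ⊕ Fin q) →₀ ℕ) (i : Fin n),
      ∑ s, e s * (Sum.elim (fun j i => k1 * A j i) (fun j i => k2 * (u j * b i)) s i)
      = k1 * (∑ j, e (Sum.inl j) * A j i) + k2 * (∑ j, e (Sum.inr j) * u j) * b i := by
    intro e i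
    rw [Fintype.sum_sum_type]
    simp only [Sum.elim_inl, Sum.elim_inr]
    congr 1
    · rw [Finset.mul_sum]
      exact Finset.sum_congr rfl fun j _ => by ring
    · rw [Finset.mul_sum, Finset.sum_mul]
      exact Finset.sum_congr rfl fun j _ => by ring
  have heq : ∀ i, k1 * (∑ j, e0 (Sum.inl j) * A j i) + k2 * (∑ j, e0 (Sum.inr j) * u j) * b i
      = k1 * (∑ j, e1 (Sum.inl j) * A j i) + k2 * (∑ j, e1 (Sum.inr j) * u j) * b i := by
    intro i
    rw [← hsplit, ← hsplit]
    exact hw i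
  obtain ⟨m, hm⟩ : ∃ m, (∑ j, e1 (Sum.inr j) * u j) = (∑ j, e0 (Sum.inr j) * u j) + m :=
    ⟨_, (Nat.add_sub_cancel' horder).symm⟩
  have hki : ∀ i, k1 * (∑ j, e0 (Sum.inl j) * A j i)
      = k1 * (∑ j, e1 (Sum.inl j) * A j i) + k2 * m * b i := by
    intro i
    have h := heq i
    rw [hm] at h
    have hx : k2 * ((∑ j, e0 (Sum.inr j) * u j) + m) * b i
        = k2 * (∑ j, e0 (Sum.inr j) * u j) * b i + k2 * m * b i := by ring
    rw [hx] at h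
    linarith
  have hdvd : ∀ i, k1 ∣ k2 * m * b i := by
    intro i
    have h1 : k1 ∣ k1 * (∑ j, e0 (Sum.inl j) * A j i) := dvd_mul_right _ _
    rw [hki i] at h1
    exact (Nat.dvd_add_right (dvd_mul_right k1 _)).mp h1
  have hgcd : k1 ∣ k2 * m := by
    have h2 : k1 ∣ Finset.univ.gcd (fun i => k2 * m * b i) :=
      Finset.dvd_gcd fun i _ => hdvd i
    rwa [Finset.gcd_mul_left, normalize_eq, hgcdb, mul_one] at h2
  obtain ⟨s, hs⟩ := Nat.Coprime.dvd_of_dvd_mul_left hcop hgcd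
  have F1 : ∀ i, (∑ j, e0 (Sum.inl j) * A j i)
      = (∑ j, e1 (Sum.inl j) * A j i) + k2 * s * b i := by
    intro i
    apply Nat.eq_of_mul_eq_mul_left hk1
    rw [hki i, hs]
    ring
  -- first binomial: in I_A
  have cond1 : ∀ i, ∑ j, (Finsupp.equivFunOnFinite.symm fun j => e0 (Sum.inl j)) j * A j i
      = ∑ j, (Finsupp.equivFunOnFinite.symm fun j => e1 (Sum.inl j) + k2 * s * d j) j * A j i := by
    intro i
    simp only [Finsupp.coe_equivFunOnFinite_symm]
    have hexp : ∑ j, (e1 (Sum.inl j) + k2 * s * d j) * A j i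
        = (∑ j, e1 (Sum.inl j) * A j i) + k2 * s * (∑ j, d j * A j i) := by
      rw [Finset.mul_sum, ← Finset.sum_add_distrib]
      exact Finset.sum_congr rfl fun j _ => by ring
    rw [hexp, ← hbA i]
    exact F1 i
  have t1mem : (monomial (embedL (q := q) fun j => e0 (Sum.inl j)) (1:k)
      - monomial (embedL fun j => e1 (Sum.inl j) + k2 * s * d j) 1)
      ∈ Ideal.map (rename (Sum.inl : Fin p → Fin p ⊕ Fin q)) (toricIdeal k A) := by
    rw [← rename_inl_binomial]
    exact Ideal.mem_map_of_mem _ (binomial_mem_toricIdeal A _ _ 1 cond1)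
  -- third binomial: in I_B
  have hgen : ∀ (w : Fin q → ℕ) (i : Fin n),
      ∑ j, w j * (u j * b i) = (∑ j, w j * u j) * b i := by
    intro w i
    rw [Finset.sum_mul]
    exact Finset.sum_congr rfl fun j _ => by ring
  have cond3 : ∀ i,
      ∑ j, (Finsupp.equivFunOnFinite.symm fun j => e0 (Sum.inr j) + s * v j) j * (u j * b i)
      = ∑ j, (Finsupp.equivFunOnFinite.symm fun j => e1 (Sum.inr j)) j * (u j * b i) := by
    intro i
    simp only [Finsupp.coe_equivFunOnFinite_symm]
    rw [hgen, hgen]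
    congr 1
    have hexp : ∑ j, (e0 (Sum.inr j) + s * v j) * u j
        = (∑ j, e0 (Sum.inr j) * u j) + s * (∑ j, v j * u j) := by
      rw [Finset.mul_sum, ← Finset.sum_add_distrib]
      exact Finset.sum_congr rfl fun j _ => by ring
    rw [hexp, ← hk1u, hm, hs]
    ring
  have t3mem : (monomial (embedR (p := p) fun j => e0 (Sum.inr j) + s * v j) (1:k)
      - monomial (embedR fun j => e1 (Sum.inr j)) 1)
      ∈ Ideal.map (rename (Sum.inr : Fin q → Fin p ⊕ Fin q))
          (toricIdeal k (fun j i => u j * b i)) := by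
    rw [← rename_inr_binomial]
    exact Ideal.mem_map_of_mem _ (binomial_mem_toricIdeal _ _ _ 1 cond3)
  -- middle binomial: multiple of ρ
  have hρ : (∏ j, X (Sum.inr j) ^ v j : MvPolynomial (Fin p ⊕ Fin q) k)
      - ∏ j, X (Sum.inl j) ^ (d j * k2)
      = monomial (embedR v) 1 - monomial (embedL fun j => d j * k2) 1 := by
    rw [prod_X_pow_s12, prod_X_pow_s12]
    rfl
  have hP : (monomial (embedL (q := q) fun j => d j * k2) (1:k)) ^ s
      = monomial (embedL fun j => k2 * s * d j) 1 := by
    rw [monomial_pow, one_pow, smul_embedL]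
    rw [show (fun j => s * (d j * k2)) = (fun j => k2 * s * d j) from funext fun j => by ring]
  have hQ : (monomial (embedR (p := p) v) (1:k)) ^ s = monomial (embedR fun j => s * v j) 1 := by
    rw [monomial_pow, one_pow, smul_embedR]
  have hdvd2 : ((monomial (embedR (p := p) v) (1:k)) - monomial (embedL fun j => d j * k2) 1)
      ∣ (monomial (embedL (q := q) fun j => k2 * s * d j) (1:k)
          - monomial (embedR fun j => s * v j) 1) := by
    rw [← hP, ← hQ]
    have h3 := sub_dvd_pow_sub_pow (monomial (embedL (q := q) fun j => d j * k2) (1:k))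
      (monomial (embedR v) 1) s
    have h4 : (monomial (embedR (p := p) v) (1:k)) - monomial (embedL fun j => d j * k2) 1
        = -((monomial (embedL (q := q) fun j => d j * k2) (1:k)) - monomial (embedR v) 1) := by
      ring
    rw [h4]
    exact neg_dvd.mpr h3
  have t2mem : ((monomial (embedL (q := q) fun j => k2 * s * d j) (1:k)
        - monomial (embedR fun j => s * v j) 1)
      * monomial ((embedL fun j => e1 (Sum.inl j)) + embedR fun j => e0 (Sum.inr j)) 1)
      ∈ Ideal.span {(∏ j, X (Sum.inr j) ^ v j : MvPolynomial (Fin p ⊕ Fin q) k) -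
          ∏ j, X (Sum.inl j) ^ (d j * k2)} := by
    rw [Ideal.mem_span_singleton, hρ]
    exact Dvd.dvd.mul_right hdvd2 _
  -- telescope
  have hfinal : monomial e0 (1:k) - monomial e1 1 =
      (monomial (embedL (q := q) fun j => e0 (Sum.inl j)) (1:k)
          - monomial (embedL fun j => e1 (Sum.inl j) + k2 * s * d j) 1)
        * monomial (embedR fun j => e0 (Sum.inr j)) 1
    + ((monomial (embedL (q := q) fun j => k2 * s * d j) (1:k)
          - monomial (embedR fun j => s * v j) 1)
        * monomial ((embedL fun j => e1 (Sum.inl j)) + embedR fun j => e0 (Sum.inr j)) 1)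
    + (monomial (embedR (p := p) fun j => e0 (Sum.inr j) + s * v j) (1:k)
          - monomial (embedR fun j => e1 (Sum.inr j)) 1)
        * monomial (embedL fun j => e1 (Sum.inl j)) 1 := by
    rw [sub_mul, sub_mul, sub_mul]
    simp only [monomial_mul, one_mul, mul_one]
    rw [embedL_add, embedR_add]
    rw [show (embedL (q := q) fun j => e0 (Sum.inl j)) + (embedR fun j => e0 (Sum.inr j))
        = e0 from (embed_decomp e0).symm]
    rw [show ((embedL fun j => e1 (Sum.inl j)) + embedL (q := q) fun j => k2 * s * d j)
          + (embedR fun j => e0 (Sum.inr j))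
        = (embedL (q := q) fun j => k2 * s * d j)
          + ((embedL fun j => e1 (Sum.inl j)) + embedR fun j => e0 (Sum.inr j)) from by abel]
    rw [show ((embedR fun j => e0 (Sum.inr j)) + embedR (p := p) fun j => s * v j)
          + (embedL fun j => e1 (Sum.inl j))
        = (embedR (p := p) fun j => s * v j)
          + ((embedL fun j => e1 (Sum.inl j)) + embedR fun j => e0 (Sum.inr j)) from by abel]
    rw [show (embedR (p := p) fun j => e1 (Sum.inr j)) + (embedL fun j => e1 (Sum.inl j))
        = (embedL fun j => e1 (Sum.inl j)) + (embedR fun j => e1 (Sum.inr j)) from add_comm _ _]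
    rw [show (embedL (q := q) fun j => e1 (Sum.inl j)) + (embedR fun j => e1 (Sum.inr j))
        = e1 from (embed_decomp e1).symm]
    ring
  rw [hfinal]
  refine add_mem (add_mem ?_ ?_) ?_
  · exact Submodule.mem_sup_left (Submodule.mem_sup_left (Ideal.mul_mem_right _ _ t1mem))
  · exact Submodule.mem_sup_right t2mem
  · exact Submodule.mem_sup_left (Submodule.mem_sup_right (Ideal.mul_mem_right _ _ t3mem))

end GlueAux


/-- Gluing along a line: if `b = Σ d_j a_j ∈ ⟨A⟩` with `gcd(b₁,…,b_n) = 1`,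
`B = (u₁b,…,u_qb)` with `q ≥ 2`, and `k₁ = Σ v_j u_j ∈ ⟨u₁,…,u_q⟩` with
`gcd(k₁,k₂) = 1`, then for `C = k₁A ∪ k₂B` one has `I_C = I_A + I_B + ⟨ρ⟩` with
`ρ = ∏ y_j^{v_j} − ∏ x_j^{d_j k₂}`; in particular `⟨C⟩` is a gluing of `⟨A⟩` and `⟨B⟩`. -/
theorem glue_line (k : Type) [Field k] {n p q : ℕ} (hq : 2 ≤ q)
    (A : Fin p → Fin n → ℕ) (b : Fin n → ℕ) (hb : b ≠ 0)
    (hgcdb : Finset.univ.gcd b = 1)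
    (d : Fin p → ℕ) (hbA : ∀ i, b i = ∑ j, d j * A j i)
    (u : Fin q → ℕ) (hu : ∀ j, 0 < u j)
    (k1 k2 : ℕ) (hk1 : 0 < k1) (hk2 : 0 < k2) (hcop : Nat.Coprime k1 k2)
    (v : Fin q → ℕ) (hk1u : k1 = ∑ j, v j * u j) :
    toricIdeal k (Sum.elim (fun j i => k1 * A j i) (fun j i => k2 * (u j * b i))) =
      Ideal.map (rename Sum.inl) (toricIdeal k A) ⊔
      Ideal.map (rename Sum.inr) (toricIdeal k (fun j i => u j * b i)) ⊔
      Ideal.span {(∏ j, X (Sum.inr j) ^ v j : MvPolynomial (Fin p ⊕ Fin q) k) -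
        ∏ j, X (Sum.inl j) ^ (d j * k2)} := by
  apply le_antisymm
  · apply GlueAux.toricIdeal_le
    intro e0 e1 hw
    rcases le_total (∑ j, e0 (Sum.inr j) * u j) (∑ j, e1 (Sum.inr j) * u j) with h | h
    · exact GlueAux.key A b hgcdb d hbA u k1 k2 hk1 hcop v hk1u e0 e1 hw h
    · have hmem := GlueAux.key (k := k) A b hgcdb d hbA u k1 k2 hk1 hcop v hk1u e1 e0
        (fun i => (hw i).symm) h
      have hneg : monomial e0 (1:k) - monomial e1 1 = -(monomial e1 1 - monomial e0 1) := by
        ring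
      rw [hneg]
      exact neg_mem hmem
  · refine sup_le (sup_le ?_ ?_) ?_
    · -- image of I_A
      rw [Ideal.map_le_iff_le_comap]
      intro f hf
      rw [Ideal.mem_comap]
      simp only [toricIdeal, RingHom.mem_ker] at hf ⊢
      rw [aeval_rename]
      have hcompo : ((fun s => ∏ i, (X i : MvPolynomial (Fin n) k) ^
            (Sum.elim (fun j i => k1 * A j i) (fun j i => k2 * (u j * b i)) s i)) ∘ Sum.inl)
          = fun j => ∏ i, (X i : MvPolynomial (Fin n) k) ^ (k1 * A j i) := by
        funext j
        simp
      rw [hcompo]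
      have hfac : (aeval (R := k) fun j => ∏ i, (X i : MvPolynomial (Fin n) k) ^ (k1 * A j i))
          = ((aeval (R := k) fun i : Fin n => (X i : MvPolynomial (Fin n) k) ^ k1).comp
              (aeval (R := k) fun j => ∏ i, (X i : MvPolynomial (Fin n) k) ^ A j i)) := by
        rw [comp_aeval]
        congr 1
        funext j
        rw [map_prod]
        exact Finset.prod_congr rfl fun i _ => by rw [map_pow, aeval_X, ← pow_mul]
      rw [hfac]
      rw [AlgHom.comp_apply, hf, map_zero]
    · -- image of I_B
      rw [Ideal.map_le_iff_le_comap]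
      intro f hf
      rw [Ideal.mem_comap]
      simp only [toricIdeal, RingHom.mem_ker] at hf ⊢
      rw [aeval_rename]
      have hcompo : ((fun s => ∏ i, (X i : MvPolynomial (Fin n) k) ^
            (Sum.elim (fun j i => k1 * A j i) (fun j i => k2 * (u j * b i)) s i)) ∘ Sum.inr)
          = fun j => ∏ i, (X i : MvPolynomial (Fin n) k) ^ (k2 * (u j * b i)) := by
        funext j
        simp
      rw [hcompo]
      have hfac : (aeval (R := k) fun j => ∏ i, (X i : MvPolynomial (Fin n) k) ^ (k2 * (u j * b i)))
          = ((aeval (R := k) fun i : Fin n => (X i : MvPolynomial (Fin n) k) ^ k2).comp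
              (aeval (R := k) fun j => ∏ i, (X i : MvPolynomial (Fin n) k) ^ (u j * b i))) := by
        rw [comp_aeval]
        congr 1
        funext j
        rw [map_prod]
        exact Finset.prod_congr rfl fun i _ => by rw [map_pow, aeval_X, ← pow_mul]
      rw [hfac]
      rw [AlgHom.comp_apply, hf, map_zero]
    · -- the binomial ρ
      rw [Ideal.span_le]
      intro x hx
      rw [Set.mem_singleton_iff] at hx
      subst hx
      have cond : ∀ i, ∑ s, (GlueAux.embedR (p := p) v) s *
            (Sum.elim (fun j i => k1 * A j i) (fun j i => k2 * (u j * b i)) s i)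
          = ∑ s, (GlueAux.embedL (q := q) fun j => d j * k2) s *
            (Sum.elim (fun j i => k1 * A j i) (fun j i => k2 * (u j * b i)) s i) := by
        intro i
        rw [Fintype.sum_sum_type, Fintype.sum_sum_type]
        simp only [Sum.elim_inl, Sum.elim_inr, GlueAux.embedR_apply_inl,
          GlueAux.embedR_apply_inr, GlueAux.embedL_apply_inl, GlueAux.embedL_apply_inr,
          zero_mul, Finset.sum_const_zero, zero_add, add_zero]
        have hL : ∑ j, v j * (k2 * (u j * b i)) = k2 * (∑ j, v j * u j) * b i := by
          rw [Finset.mul_sum, Finset.sum_mul]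
          exact Finset.sum_congr rfl fun j _ => by ring
        have hR : ∑ j, (d j * k2) * (k1 * A j i) = k1 * k2 * ∑ j, d j * A j i := by
          rw [Finset.mul_sum]
          exact Finset.sum_congr rfl fun j _ => by ring
        rw [hL, hR, ← hk1u, ← hbA i]
        ring
      have := GlueAux.binomial_mem_toricIdeal (k := k)
        (Sum.elim (fun j i => k1 * A j i) (fun j i => k2 * (u j * b i)))
        (GlueAux.embedR v) (GlueAux.embedL fun j => d j * k2) 1 cond
      rw [GlueAux.prod_X_pow_s12, GlueAux.prod_X_pow_s12]
      exact this
end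

section
/- Let A = (a_1,…,a_p) ⊂ ℕ^n (also viewed as an n×p matrix), let b ∈ ℕ^n be nonzero with gcd(b_1,…,b_n) = 1, let u_1,…,u_q be positive integers, and set B = (u_1b,…,u_qb). Let k_1, k_2 be positive integers with gcd(k_1,k_2) = 1 and set C = k_1A ∪ k_2B. For α ∈ ℤ^q and β ∈ ℤ^p, write α_+ = {j : α_j > 0}, α_− = {j : α_j < 0} and similarly for β. Then the binomial w = (∏_{j∈α_+} y_j^{α_j})(∏_{j∈β_−} x_j^{−β_j}) − (∏_{j∈α_−} y_j^{−α_j})(∏_{j∈β_+} x_j^{β_j}) belongs to the toric ideal I_C if and only if there exists s ∈ ℤ such that Σ_{j=1}^q α_j u_j = k_1·s and A·β = k_2·s·b. -/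
open MvPolynomial

lemma prod_X_pow_univ {k : Type} [Field k] {n : ℕ} (d : Fin n → ℕ) :
    ∏ i, (X i : MvPolynomial (Fin n) k) ^ d i =
      monomial (Finsupp.equivFunOnFinite.symm d) 1 := by
  rw [← prod_X_pow_eq_monomial]
  refine (Finset.prod_subset (Finset.subset_univ _) fun i _ hi => ?_).symm
  have h0 : (Finsupp.equivFunOnFinite.symm d) i = 0 := Finsupp.notMem_support_iff.mp hi
  simp only [Finsupp.coe_equivFunOnFinite_symm] at h0 ⊢
  simp [h0]

lemma aeval_prod_pow_aux {k : Type} [Field k] {m n : ℕ} (c : Fin m → Fin n → ℕ)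
    (e : Fin m → ℕ) :
    ∏ j, (∏ i, (X i : MvPolynomial (Fin n) k) ^ c j i) ^ e j
      = ∏ i, X i ^ (∑ j, e j * c j i) := by
  calc ∏ j, (∏ i, (X i : MvPolynomial (Fin n) k) ^ c j i) ^ e j
      = ∏ j, ∏ i, (X i : MvPolynomial (Fin n) k) ^ (c j i * e j) := by
        simp_rw [← Finset.prod_pow, ← pow_mul]
    _ = ∏ i, ∏ j, (X i : MvPolynomial (Fin n) k) ^ (c j i * e j) := Finset.prod_comm
    _ = ∏ i, X i ^ (∑ j, e j * c j i) := by
        refine Finset.prod_congr rfl fun i _ => ?_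
        rw [Finset.prod_pow_eq_pow_sum]
        congr 1
        exact Finset.sum_congr rfl fun j _ => mul_comm _ _

/-- Membership criterion for binomials in `I_C` when `C = k₁A ∪ k₂B` and `B = (u₁b,…,u_qb)`:
the binomial `(∏_{αⱼ>0} y_j^{α_j})(∏_{βⱼ<0} x_j^{−β_j}) − (∏_{αⱼ<0} y_j^{−α_j})(∏_{βⱼ>0} x_j^{β_j})`
lies in `I_C` if and only if there is `s ∈ ℤ` with `Σ α_j u_j = k₁·s` and `A·β = k₂·s·b`. -/
theorem binomial_mem_iff_level (k : Type) [Field k] {n p q : ℕ}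
    (A : Fin p → Fin n → ℕ) (b : Fin n → ℕ) (hb : b ≠ 0)
    (hgcdb : Finset.univ.gcd b = 1)
    (u : Fin q → ℕ) (hu : ∀ j, 0 < u j)
    (k1 k2 : ℕ) (hk1 : 0 < k1) (hk2 : 0 < k2) (hcop : Nat.Coprime k1 k2)
    (α : Fin q → ℤ) (β : Fin p → ℤ) :
    ((∏ j, X (Sum.inr j) ^ (α j).toNat) * (∏ j, X (Sum.inl j) ^ (-β j).toNat) -
        (∏ j, X (Sum.inr j) ^ (-α j).toNat) * (∏ j, X (Sum.inl j) ^ (β j).toNat) :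
        MvPolynomial (Fin p ⊕ Fin q) k) ∈
      toricIdeal k (Sum.elim (fun j i => k1 * A j i) (fun j i => k2 * (u j * b i))) ↔
    ∃ s : ℤ, (∑ j, α j * (u j : ℤ) = (k1 : ℤ) * s) ∧
      ∀ i, ∑ j, β j * (A j i : ℤ) = (k2 : ℤ) * s * (b i : ℤ) := by
  classical
  set S : ℤ := ∑ j, α j * (u j : ℤ) with hS
  set T : Fin n → ℤ := fun i => ∑ j, β j * (A j i : ℤ) with hT
  set C : (Fin p ⊕ Fin q) → Fin n → ℕ :=
    Sum.elim (fun j i => k1 * A j i) (fun j i => k2 * (u j * b i)) with hC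
  -- Image of a pure monomial under the toric map
  have himg : ∀ (e : Fin q → ℕ) (f : Fin p → ℕ),
      (aeval (R := k) fun j => ∏ i, (X i : MvPolynomial (Fin n) k) ^ C j i)
          ((∏ j, X (Sum.inr j) ^ e j) * ∏ j, X (Sum.inl j) ^ f j)
        = monomial (Finsupp.equivFunOnFinite.symm fun i =>
            (∑ j, e j * (k2 * (u j * b i))) + ∑ j, f j * (k1 * A j i)) 1 := by
    intro e f
    rw [map_mul, map_prod, map_prod]
    simp only [map_pow, aeval_X, hC, Sum.elim_inl, Sum.elim_inr]
    rw [aeval_prod_pow_aux, aeval_prod_pow_aux, ← Finset.prod_mul_distrib]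
    simp_rw [← pow_add]
    exact prod_X_pow_univ _
  -- membership is equivalent to equality of natural exponents
  have hker : ((∏ j, X (Sum.inr j) ^ (α j).toNat) * (∏ j, X (Sum.inl j) ^ (-β j).toNat) -
        (∏ j, X (Sum.inr j) ^ (-α j).toNat) * (∏ j, X (Sum.inl j) ^ (β j).toNat) :
        MvPolynomial (Fin p ⊕ Fin q) k) ∈ toricIdeal k C ↔
      ∀ i, (∑ j, (α j).toNat * (k2 * (u j * b i))) + ∑ j, (-β j).toNat * (k1 * A j i)
        = (∑ j, (-α j).toNat * (k2 * (u j * b i))) + ∑ j, (β j).toNat * (k1 * A j i) := by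
    rw [toricIdeal, RingHom.mem_ker, map_sub, sub_eq_zero, himg, himg,
      monomial_eq_monomial_iff]
    constructor
    · rintro (⟨h, -⟩ | ⟨h, -⟩)
      · intro i
        have := congrArg (fun g => Finsupp.equivFunOnFinite g i) h
        simpa using this
      · exact absurd h one_ne_zero
    · intro h
      exact Or.inl ⟨by ext i; simpa using h i, rfl⟩
  -- translate the exponent equality into a ℤ equation
  have key : ∀ i : Fin n,
      ((∑ j, (α j).toNat * (k2 * (u j * b i))) + ∑ j, (-β j).toNat * (k1 * A j i)
        = (∑ j, (-α j).toNat * (k2 * (u j * b i))) + ∑ j, (β j).toNat * (k1 * A j i))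
      ↔ (k2 : ℤ) * S * b i = (k1 : ℤ) * T i := by
    intro i
    rw [← Nat.cast_inj (R := ℤ)]
    push_cast
    have h1 : (∑ j, ((α j).toNat : ℤ) * ((k2 : ℤ) * (u j * b i)))
        - ∑ j, (((-α j).toNat : ℤ) * ((k2 : ℤ) * (u j * b i)))
        = (k2 : ℤ) * S * b i := by
      rw [← Finset.sum_sub_distrib, hS, Finset.mul_sum, Finset.sum_mul]
      refine Finset.sum_congr rfl fun j _ => ?_
      have : ((α j).toNat : ℤ) - ((-α j).toNat : ℤ) = α j := by omega
      rw [← sub_mul, this]; ring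
    have h2 : (∑ j, ((β j).toNat : ℤ) * ((k1 : ℤ) * (A j i)))
        - ∑ j, (((-β j).toNat : ℤ) * ((k1 : ℤ) * (A j i)))
        = (k1 : ℤ) * T i := by
      rw [← Finset.sum_sub_distrib, hT, Finset.mul_sum]
      refine Finset.sum_congr rfl fun j _ => ?_
      have : ((β j).toNat : ℤ) - ((-β j).toNat : ℤ) = β j := by omega
      rw [← sub_mul, this]; ring
    constructor
    · intro h; linarith
    · intro h; linarith
  rw [hker]
  simp_rw [key]
  constructor
  · intro h
    -- first show k1 ∣ S
    have hco : IsCoprime (k1 : ℤ) (k2 : ℤ) := by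
      rw [Int.isCoprime_iff_gcd_eq_one, Int.gcd_natCast_natCast]
      exact hcop
    have hd : ∀ i, (k1 : ℤ) ∣ S * b i := by
      intro i
      refine hco.dvd_of_dvd_mul_left ⟨T i, ?_⟩
      have := h i; linarith
    have hdn : ∀ i, k1 ∣ S.natAbs * b i := by
      intro i
      have := Int.natAbs_dvd_natAbs.mpr (hd i)
      simpa [Int.natAbs_mul] using this
    have hdS : k1 ∣ S.natAbs := by
      have hg : k1 ∣ Finset.univ.gcd (fun i => S.natAbs * b i) :=
        Finset.dvd_gcd fun i _ => hdn i
      rwa [Finset.gcd_mul_left, hgcdb, mul_one, normalize_eq] at hg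
    have hdSZ : (k1 : ℤ) ∣ S := by
      have := Int.natCast_dvd_natCast.mpr hdS
      exact Int.dvd_natAbs.mp this
    obtain ⟨s, hs⟩ := hdSZ
    refine ⟨s, hs, fun i => ?_⟩
    have hi := h i
    rw [hs] at hi
    have hk1' : (k1 : ℤ) ≠ 0 := by exact_mod_cast hk1.ne'
    have : (k1 : ℤ) * ((k2 : ℤ) * s * b i) = (k1 : ℤ) * T i := by ring_nf; ring_nf at hi; linarith
    exact (mul_left_cancel₀ hk1' this).symm
  · rintro ⟨s, hs1, hs2⟩ i
    simp only [hT]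
    rw [hs1, hs2 i]
    ring
end

section
/- Let A = (a_1,…,a_p) ⊂ ℕ^n (also viewed as an n×p matrix), let b ∈ ℕ^n be nonzero with gcd(b_1,…,b_n) = 1, let u_1,…,u_q be positive integers with q ≥ 2, and set B = (u_1b,…,u_qb) (so all elements of B lie on the line through b). Then ⟨A⟩ and ⟨B⟩ can be glued if and only if some positive multiple of b belongs to ⟨A⟩, equivalently if and only if the linear system A·X = d·b has a solution X ∈ ℕ^p for some positive integer d. -/
open MvPolynomial

section Helpers


variable {k : Type} [Field k] {n : ℕ} {σ : Type}

/-- product-of-powers monomial -/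
noncomputable def pMon (k : Type) [Field k] {ι : Type} [Fintype ι] (c : ι → ℕ) :
    MvPolynomial ι k := ∏ i, X i ^ c i

lemma pMon_eq_monomial {ι : Type} [Fintype ι] (c : ι → ℕ) :
    pMon k c = monomial (Finsupp.equivFunOnFinite.symm c) (1 : k) := by
  rw [monomial_eq, C_1, one_mul, Finsupp.prod_fintype]
  · rfl
  · intro i; exact pow_zero _

lemma pMon_injective {ι : Type} [Fintype ι] :
    Function.Injective (pMon k (ι := ι)) := by
  intro c c' h
  rw [pMon_eq_monomial, pMon_eq_monomial] at h
  exact Finsupp.equivFunOnFinite.symm.injective.eq_iff.mp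
    (monomial_left_injective (one_ne_zero (α := k)) h)

/-- exponent of the image monomial under the toric map -/
def degf (v : σ → Fin n → ℕ) (m : σ →₀ ℕ) : Fin n → ℕ :=
  fun i => m.sum fun j e => e * v j i

lemma degf_symm [Fintype σ] (v : σ → Fin n → ℕ) (γ : σ → ℕ) (i : Fin n) :
    degf v (Finsupp.equivFunOnFinite.symm γ) i = ∑ j, γ j * v j i := by
  unfold degf
  rw [Finsupp.sum_fintype]
  · rfl
  · intro j; exact Nat.zero_mul _

lemma aeval_monomial_one (v : σ → Fin n → ℕ) (m : σ →₀ ℕ) :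
    aeval (R := k) (fun j => pMon k (v j)) (monomial m 1) = pMon k (degf v m) := by
  rw [aeval_monomial, map_one, one_mul]
  unfold pMon degf
  simp only [Finsupp.prod, Finsupp.sum, ← Finset.prod_pow_eq_pow_sum, ← pow_mul]
  rw [Finset.prod_comm]
  refine Finset.prod_congr rfl fun j _ => ?_
  rw [← Finset.prod_pow]
  exact Finset.prod_congr rfl fun i _ => by rw [← pow_mul, Nat.mul_comm]

lemma toricIdeal_eq (v : σ → Fin n → ℕ) :
    toricIdeal k v = RingHom.ker (aeval (R := k) fun j => pMon k (v j)) := rfl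

lemma binomial_mem_toric {v : σ → Fin n → ℕ} {m m' : σ →₀ ℕ} (h : degf v m = degf v m') :
    (monomial m 1 - monomial m' 1 : MvPolynomial σ k) ∈ toricIdeal k v := by
  rw [toricIdeal_eq, RingHom.mem_ker, map_sub, aeval_monomial_one, aeval_monomial_one, h,
    sub_self]

lemma pMon_binomial_mem_toric [Fintype σ] {v : σ → Fin n → ℕ} {γ γ' : σ → ℕ}
    (h : ∀ i, ∑ j, γ j * v j i = ∑ j, γ' j * v j i) :
    (pMon k γ - pMon k γ' : MvPolynomial σ k) ∈ toricIdeal k v := by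
  rw [pMon_eq_monomial, pMon_eq_monomial]
  refine binomial_mem_toric ?_
  funext i
  rw [degf_symm, degf_symm]
  exact h i

theorem toric_mem_span_binomials (v : σ → Fin n → ℕ) :
    ∀ f ∈ toricIdeal k v, f ∈ Submodule.span k {g : MvPolynomial σ k | ∃ m m' : σ →₀ ℕ,
      degf v m = degf v m' ∧ g = monomial m 1 - monomial m' 1} := by
  classical
  suffices H : ∀ (N : ℕ) (f : MvPolynomial σ k), f.support.card ≤ N → f ∈ toricIdeal k v →
      f ∈ Submodule.span k {g : MvPolynomial σ k | ∃ m m' : σ →₀ ℕ,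
        degf v m = degf v m' ∧ g = monomial m 1 - monomial m' 1} by
    exact fun f hf => H f.support.card f le_rfl hf
  intro N
  induction N with
  | zero =>
    intro f h _
    have : f = 0 := by
      rw [← support_eq_empty, ← Finset.card_eq_zero]; omega
    simp [this]
  | succ N ih =>
    intro f hcard hf
    by_cases hf0 : f = 0
    · simp [hf0]
    obtain ⟨m₀, hm₀⟩ := (support_nonempty.mpr hf0)
    have him : aeval (R := k) (fun j => pMon k (v j)) f
        = ∑ m ∈ f.support, (coeff m f) • pMon k (degf v m) := by
      conv_lhs => rw [f.as_sum]
      rw [map_sum]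
      refine Finset.sum_congr rfl fun m hm => ?_
      have h1 : monomial m (coeff m f) = (coeff m f) • monomial m (1:k) := by
        rw [smul_monomial, smul_eq_mul, mul_one]
      rw [h1, map_smul, aeval_monomial_one]
    have hker : aeval (R := k) (fun j => pMon k (v j)) f = 0 := by
      rw [toricIdeal_eq, RingHom.mem_ker] at hf; exact hf
    have h0 : ∑ m ∈ f.support.filter (fun m => degf v m = degf v m₀), coeff m f = 0 := by
      have hc := congrArg (coeff (Finsupp.equivFunOnFinite.symm (degf v m₀))) (him.symm.trans hker)
      rw [coeff_zero] at hc
      rw [← hc, Finset.sum_filter]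
      rw [coeff_sum]
      refine Finset.sum_congr rfl fun m hm => ?_
      rw [pMon_eq_monomial, coeff_smul, coeff_monomial]
      by_cases hd : degf v m = degf v m₀
      · simp [hd]
      · have : Finsupp.equivFunOnFinite.symm (degf v m) ≠
            Finsupp.equivFunOnFinite.symm (degf v m₀) := by
          simpa using hd
        simp [this, hd]
    have hm₀f : m₀ ∈ f.support.filter (fun m => degf v m = degf v m₀) :=
      Finset.mem_filter.mpr ⟨hm₀, rfl⟩
    have hex : ∃ m₁ ∈ f.support.filter (fun m => degf v m = degf v m₀), m₁ ≠ m₀ := by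
      by_contra hcon
      push_neg at hcon
      have heq : f.support.filter (fun m => degf v m = degf v m₀) = {m₀} :=
        Finset.eq_singleton_iff_unique_mem.mpr ⟨hm₀f, hcon⟩
      rw [heq, Finset.sum_singleton] at h0
      exact (mem_support_iff.mp hm₀) h0
    obtain ⟨m₁, hm₁f, hm₁ne⟩ := hex
    have hdeg : degf v m₀ = degf v m₁ := ((Finset.mem_filter.mp hm₁f).2).symm
    have hm₁s : m₁ ∈ f.support := (Finset.mem_filter.mp hm₁f).1
    set c₀ := coeff m₀ f with hc₀
    set bin : MvPolynomial σ k := monomial m₀ 1 - monomial m₁ 1 with hbin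
    set g := f - c₀ • bin with hg
    have hbink : bin ∈ toricIdeal k v := binomial_mem_toric hdeg
    have hgk : g ∈ toricIdeal k v := by
      refine Submodule.sub_mem _ hf ?_
      have : c₀ • bin = C c₀ * bin := by rw [smul_eq_C_mul]
      rw [this]
      exact Ideal.mul_mem_left _ _ hbink
    have hsupp : g.support ⊆ f.support.erase m₀ := by
      intro m hm
      rw [Finset.mem_erase]
      have hcm : coeff m g ≠ 0 := mem_support_iff.mp hm
      have hcg : coeff m g = coeff m f - c₀ * ((if m₀ = m then (1:k) else 0)
          - (if m₁ = m then 1 else 0)) := by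
        rw [hg, hbin, coeff_sub, coeff_smul, coeff_sub, coeff_monomial, coeff_monomial,
          smul_eq_mul]
      constructor
      · rintro rfl
        rw [if_pos rfl, if_neg hm₁ne] at hcg
        simp [hc₀] at hcg
        exact hcm hcg
      · by_contra hns
        have hcf : coeff m f = 0 := notMem_support_iff.mp hns
        have hmm₀ : m₀ ≠ m := by rintro rfl; exact hns hm₀
        have hmm₁ : m₁ ≠ m := by rintro rfl; exact hns hm₁s
        rw [hcf, if_neg hmm₀, if_neg hmm₁] at hcg
        simp at hcg
        exact hcm hcg
    have hcard' : g.support.card ≤ N := by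
      have h1 := Finset.card_le_card hsupp
      have h2 := Finset.card_erase_of_mem hm₀
      omega
    have hgs := ih g hcard' hgk
    have : f = g + c₀ • bin := by rw [hg]; ring
    rw [this]
    exact Submodule.add_mem _ hgs (Submodule.smul_mem _ _
      (Submodule.subset_span ⟨m₀, m₁, hdeg.symm ▸ rfl, rfl⟩))

/-- Bezout for finite families of naturals. -/
lemma finset_gcd_bezout {ι : Type} [DecidableEq ι] (s : Finset ι) (f : ι → ℕ) :
    ∃ z : ι → ℤ, ∑ j ∈ s, z j * f j = ((s.gcd f : ℕ) : ℤ) := by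
  induction s using Finset.induction with
  | empty => exact ⟨0, by simp⟩
  | @insert a s ha ih =>
    obtain ⟨z, hz⟩ := ih
    refine ⟨fun j => if j = a then Nat.gcdA (f a) (s.gcd f)
      else Nat.gcdB (f a) (s.gcd f) * z j, ?_⟩
    rw [Finset.sum_insert ha]
    simp only [if_pos rfl]
    have hb := Nat.gcd_eq_gcd_ab (f a) (s.gcd f)
    have hsum : ∑ j ∈ s, (if j = a then Nat.gcdA (f a) (s.gcd f)
        else Nat.gcdB (f a) (s.gcd f) * z j) * f j
        = Nat.gcdB (f a) (s.gcd f) * ∑ j ∈ s, z j * f j := by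
      rw [Finset.mul_sum]
      refine Finset.sum_congr rfl fun j hj => ?_
      rw [if_neg (by rintro rfl; exact ha hj)]
      ring
    rw [hsum, hz, Finset.gcd_insert]
    rw [show (GCDMonoid.gcd (f a) (s.gcd f) : ℕ) = Nat.gcd (f a) (s.gcd f) from rfl, hb]
    simp only [if_true]
    ring

/-- existence of an element coprime to `D` in the numerical semigroup `⟨a, a+1⟩` -/
lemma exists_coprime_rep (a D : ℕ) (hD : 0 < D) : ∃ t x y : ℕ, 0 < t ∧ Nat.Coprime t D ∧
    t = x * a + y * (a + 1) := by
  rcases Nat.eq_zero_or_pos a with rfl | ha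
  · exact ⟨1, 0, 1, one_pos, Nat.coprime_one_left D, by simp⟩
  · refine ⟨a * a * D + 1, a * D - 1, 1, by positivity, ?_, ?_⟩
    · have h := (Nat.coprime_add_mul_left_left 1 D (a*a)).mpr (Nat.coprime_one_left D)
      have he : a * a * D + 1 = 1 + D * (a*a) := by ring
      rw [he]
      exact h
    · obtain ⟨m, hm⟩ : ∃ m, a * D = m + 1 := ⟨a * D - 1, by
        have : 0 < a * D := Nat.mul_pos ha hD; omega⟩
      have h2 : a * a * D = a * m + a := by rw [Nat.mul_assoc, hm, Nat.mul_add, Nat.mul_one]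
      rw [h2, hm]
      have h3 : (m + 1 - 1) * a = m * a := by rw [Nat.add_sub_cancel]
      rw [h3, Nat.mul_comm m a]
      omega

end Helpers

/-- `⟨A ∪ B⟩` is a gluing of `⟨A⟩` and `⟨B⟩`:
`I_{A∪B} = I_A + I_B + ⟨x^α − y^β⟩` for some `α ≠ 0 ≠ β`. -/
def IsGluing (k : Type) [Field k] {n p q : ℕ}
    (A : Fin p → Fin n → ℕ) (B : Fin q → Fin n → ℕ) : Prop :=
  ∃ (α : Fin p → ℕ) (β : Fin q → ℕ), α ≠ 0 ∧ β ≠ 0 ∧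
    toricIdeal k (Sum.elim A B) =
      Ideal.map (rename Sum.inl) (toricIdeal k A) ⊔
      Ideal.map (rename Sum.inr) (toricIdeal k B) ⊔
      Ideal.span {(∏ j, X (Sum.inl j) ^ α j : MvPolynomial (Fin p ⊕ Fin q) k) -
        ∏ j, X (Sum.inr j) ^ β j}

/-- `⟨A⟩` and `⟨B⟩` can be glued: for some positive `k₁, k₂`, the semigroup
`⟨k₁A ∪ k₂B⟩` is a gluing of `⟨k₁A⟩` and `⟨k₂B⟩`. -/
def CanBeGlued (k : Type) [Field k] {n p q : ℕ}
    (A : Fin p → Fin n → ℕ) (B : Fin q → Fin n → ℕ) : Prop :=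
  ∃ k1 k2 : ℕ, 0 < k1 ∧ 0 < k2 ∧
    IsGluing k (fun j i => k1 * A j i) (fun j i => k2 * B j i)

section Main


variable {k : Type} [Field k] {n p q : ℕ}

/-- x-side product of powers in the combined ring -/
noncomputable def xP (k : Type) [Field k] {p q : ℕ} (α : Fin p → ℕ) :
    MvPolynomial (Fin p ⊕ Fin q) k := ∏ j, X (Sum.inl j) ^ α j

noncomputable def yP (k : Type) [Field k] {p q : ℕ} (β : Fin q → ℕ) :
    MvPolynomial (Fin p ⊕ Fin q) k := ∏ j, X (Sum.inr j) ^ β j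

lemma rename_pMon_inl (α : Fin p → ℕ) :
    rename (Sum.inl : Fin p → Fin p ⊕ Fin q) (pMon k α) = xP k α := by
  unfold pMon xP
  rw [map_prod]
  exact Finset.prod_congr rfl fun j _ => by rw [map_pow, rename_X]

lemma rename_pMon_inr (β : Fin q → ℕ) :
    rename (Sum.inr : Fin q → Fin p ⊕ Fin q) (pMon k β) = yP k (p := p) β := by
  unfold pMon yP
  rw [map_prod]
  exact Finset.prod_congr rfl fun j _ => by rw [map_pow, rename_X]

lemma monomial_eq_xP_yP (m : (Fin p ⊕ Fin q) →₀ ℕ) :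
    (monomial m 1 : MvPolynomial (Fin p ⊕ Fin q) k)
      = xP k (fun j => m (Sum.inl j)) * yP k (fun j => m (Sum.inr j)) := by
  have h1 : m = Finsupp.equivFunOnFinite.symm
      (Sum.elim (fun j => m (Sum.inl j)) (fun j => m (Sum.inr j))) := by
    ext a
    cases a <;> rfl
  rw [h1, ← pMon_eq_monomial]
  unfold pMon xP yP
  rw [Fintype.prod_sum_type]
  rfl

end Main

section Rev


variable {k : Type} [Field k] {n p q : ℕ}

lemma xP_add (γ γ' : Fin p → ℕ) :
    (xP k (fun j => γ j + γ' j) : MvPolynomial (Fin p ⊕ Fin q) k) = xP k γ * xP k γ' := by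
  unfold xP
  rw [← Finset.prod_mul_distrib]
  exact Finset.prod_congr rfl fun j _ => pow_add _ _ _

lemma xP_mul (γ : Fin p → ℕ) (l : ℕ) :
    (xP k (fun j => γ j * l) : MvPolynomial (Fin p ⊕ Fin q) k) = (xP k γ) ^ l := by
  unfold xP
  rw [← Finset.prod_pow]
  exact Finset.prod_congr rfl fun j _ => pow_mul _ _ _

lemma yP_add (γ γ' : Fin q → ℕ) :
    (yP k (fun j => γ j + γ' j) : MvPolynomial (Fin p ⊕ Fin q) k) = yP k γ * yP k γ' := by
  unfold yP
  rw [← Finset.prod_mul_distrib]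
  exact Finset.prod_congr rfl fun j _ => pow_add _ _ _

lemma yP_mul (γ : Fin q → ℕ) (l : ℕ) :
    (yP k (fun j => γ j * l) : MvPolynomial (Fin p ⊕ Fin q) k) = (yP k γ) ^ l := by
  unfold yP
  rw [← Finset.prod_pow]
  exact Finset.prod_congr rfl fun j _ => pow_mul _ _ _

lemma map_rename_toric_le_left (vA : Fin p → Fin n → ℕ) (vB : Fin q → Fin n → ℕ) :
    Ideal.map (rename Sum.inl) (toricIdeal k vA) ≤ toricIdeal k (Sum.elim vA vB) := by
  rw [Ideal.map_le_iff_le_comap]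
  intro f hf
  rw [Ideal.mem_comap]
  rw [toricIdeal_eq, RingHom.mem_ker] at hf ⊢
  rw [aeval_rename]
  exact hf

lemma map_rename_toric_le_right (vA : Fin p → Fin n → ℕ) (vB : Fin q → Fin n → ℕ) :
    Ideal.map (rename Sum.inr) (toricIdeal k vB) ≤ toricIdeal k (Sum.elim vA vB) := by
  rw [Ideal.map_le_iff_le_comap]
  intro f hf
  rw [Ideal.mem_comap]
  rw [toricIdeal_eq, RingHom.mem_ker] at hf ⊢
  rw [aeval_rename]
  exact hf

lemma aeval_xP (vA : Fin p → Fin n → ℕ) (vB : Fin q → Fin n → ℕ) (α : Fin p → ℕ) :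
    aeval (R := k) (fun j => pMon k (Sum.elim vA vB j)) (xP k α)
      = pMon k (fun i => ∑ j, α j * vA j i) := by
  rw [← rename_pMon_inl, aeval_rename]
  have : ((fun j => pMon k (Sum.elim vA vB j)) ∘ Sum.inl) = fun j => pMon k (vA j) := rfl
  rw [this, pMon_eq_monomial, aeval_monomial_one]
  congr 1
  funext i
  rw [degf_symm]

lemma aeval_yP (vA : Fin p → Fin n → ℕ) (vB : Fin q → Fin n → ℕ) (β : Fin q → ℕ) :
    aeval (R := k) (fun j => pMon k (Sum.elim vA vB j)) (yP k (p := p) β)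
      = pMon k (fun i => ∑ j, β j * vB j i) := by
  rw [← rename_pMon_inr, aeval_rename]
  have : ((fun j => pMon k (Sum.elim vA vB j)) ∘ Sum.inr) = fun j => pMon k (vB j) := rfl
  rw [this, pMon_eq_monomial, aeval_monomial_one]
  congr 1
  funext i
  rw [degf_symm]

theorem glue_of_solution_s14 (A : Fin p → Fin n → ℕ) (b : Fin n → ℕ) (hb : b ≠ 0)
    (hgcdb : Finset.univ.gcd b = 1) (u : Fin q → ℕ) (hu : ∀ j, 0 < u j) [NeZero q]
    (d : ℕ) (hd : 0 < d) (Xv : Fin p → ℕ) (hXv : ∀ i, ∑ j, Xv j * A j i = d * b i) :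
    CanBeGlued k A (fun j i => u j * b i) := by
  classical
  set g := Finset.univ.gcd u with hgdef
  have hg : 0 < g := by
    rcases Nat.eq_zero_or_pos g with h | h
    · exfalso
      have j0 : Fin q := ⟨0, Nat.pos_of_ne_zero (NeZero.ne q)⟩
      have h2 := Finset.gcd_eq_zero_iff.mp h j0 (Finset.mem_univ _)
      have h3 := hu j0
      omega
    · exact h
  have hgu : ∀ j, g ∣ u j := fun j => Finset.gcd_dvd (Finset.mem_univ j)
  obtain ⟨z, hz⟩ := finset_gcd_bezout Finset.univ u
  set Pp := ∑ j, (z j).toNat * u j with hPdef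
  set Nn := ∑ j, (-z j).toNat * u j with hNdef
  have hPN : (Pp : ℤ) = Nn + g := by
    have h1 : ∀ j : Fin q, ((z j).toNat : ℤ) * u j = ((-z j).toNat : ℤ) * u j + z j * u j := by
      intro j
      have h2 : ((z j).toNat : ℤ) - ((-z j).toNat : ℤ) = z j := Int.toNat_sub_toNat_neg (z j)
      linear_combination (u j : ℤ) * h2
    have h4 : (Pp : ℤ) = ∑ j, ((z j).toNat : ℤ) * u j := by rw [hPdef]; push_cast; rfl
    have h5 : (Nn : ℤ) = ∑ j, ((-z j).toNat : ℤ) * u j := by rw [hNdef]; push_cast; rfl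
    rw [h4, Finset.sum_congr rfl (fun j _ => h1 j), Finset.sum_add_distrib, hz, h5, hgdef]
  have hgNn : g ∣ Nn := Finset.dvd_sum fun j _ => Dvd.dvd.mul_left (hgu j) _
  obtain ⟨a, hNa⟩ := hgNn
  have hPa : Pp = g * (a + 1) := by
    have : (Pp : ℤ) = (g * (a+1) : ℕ) := by rw [hPN, hNa]; push_cast; ring
    exact_mod_cast this
  -- the ideal of multiples of b in the lattice of A
  set L : Ideal ℤ :=
    { carrier := {c : ℤ | ∃ Y : Fin p → ℤ, ∀ i, ∑ j, Y j * A j i = c * b i}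
      add_mem' := by
        rintro c c' ⟨Y, hY⟩ ⟨Y', hY'⟩
        exact ⟨Y + Y', fun i => by
          simp only [Pi.add_apply, add_mul, Finset.sum_add_distrib, hY i, hY' i]⟩
      zero_mem' := ⟨0, fun i => by simp⟩
      smul_mem' := by
        rintro r c ⟨Y, hY⟩
        refine ⟨r • Y, fun i => ?_⟩
        have h6 : ∑ j, (r • Y) j * (A j i : ℤ) = r * ∑ j, Y j * A j i := by
          rw [Finset.mul_sum]
          refine Finset.sum_congr rfl fun j _ => ?_
          rw [Pi.smul_apply, smul_eq_mul]
          ring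
        rw [h6, hY i, smul_eq_mul]
        ring }
    with hLdef
  have hdL : (d : ℤ) ∈ L := by
    refine ⟨fun j => (Xv j : ℤ), fun i => ?_⟩
    have h1 := congrArg (Nat.cast : ℕ → ℤ) (hXv i)
    push_cast at h1 ⊢
    exact h1
  have hprin : L.IsPrincipal := IsPrincipalIdealRing.principal L
  set e := (Submodule.IsPrincipal.generator L).natAbs with hedef
  have hLdvd : ∀ c : ℤ, c ∈ L → (e : ℤ) ∣ c := by
    intro c hc
    exact Int.natAbs_dvd.mpr ((Submodule.IsPrincipal.mem_iff_generator_dvd L).mp hc)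
  have hed : e ∣ d := Int.natCast_dvd_natCast.mp (by exact_mod_cast hLdvd _ hdL)
  have he : 0 < e := by
    rcases Nat.eq_zero_or_pos e with h | h
    · exfalso
      have h2 := hLdvd _ hdL
      rw [h, Int.natCast_zero, zero_dvd_iff] at h2
      have h3 : d = 0 := by exact_mod_cast h2
      omega
    · exact h
  obtain ⟨D, hDd⟩ := hed
  have hD : 0 < D := by
    rcases Nat.eq_zero_or_pos D with h | h
    · rw [h, Nat.mul_zero] at hDd; omega
    · exact h
  obtain ⟨t, x, y, ht, htD, htxy⟩ := exists_coprime_rep a D hD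
  set c : Fin q → ℕ := fun j => x * (-z j).toNat + y * (z j).toNat with hcdef
  have hcu : ∑ j, c j * u j = g * t := by
    have : ∑ j, c j * u j = x * Nn + y * Pp := by
      rw [hcdef, hNdef, hPdef, Finset.mul_sum, Finset.mul_sum, ← Finset.sum_add_distrib]
      exact Finset.sum_congr rfl fun j _ => by ring
    rw [this, hNa, hPa, htxy]
    ring
  set k1 := g * t with hk1def
  set k2 := d with hk2def
  -- the glued families
  set vA : Fin p → Fin n → ℕ := fun j i => k1 * A j i with hvAdef
  set vB : Fin q → Fin n → ℕ := fun j i => k2 * (u j * b i) with hvBdef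
  set vC := Sum.elim vA vB with hvCdef
  have hXv0 : Xv ≠ 0 := by
    intro h0
    apply hb
    funext i
    have h1 := hXv i
    rw [h0] at h1
    simp only [Pi.zero_apply, Nat.zero_mul, Finset.sum_const_zero] at h1
    rcases Nat.mul_eq_zero.mp h1.symm with h | h
    · omega
    · exact h
  have hc0 : c ≠ 0 := by
    intro h0
    rw [h0] at hcu
    simp at hcu
    have : 0 < g * t := Nat.mul_pos hg ht
    omega
  refine ⟨k1, k2, Nat.mul_pos hg ht, hd, Xv, c, hXv0, hc0, ?_⟩
  -- the ideal equality
  show toricIdeal k vC =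
      Ideal.map (rename Sum.inl) (toricIdeal k vA) ⊔
      Ideal.map (rename Sum.inr) (toricIdeal k vB) ⊔
      Ideal.span {(xP k Xv : MvPolynomial (Fin p ⊕ Fin q) k) - yP k c}
  set JA := Ideal.map (rename (Sum.inl : Fin p → Fin p ⊕ Fin q)) (toricIdeal (n := n) k vA)
    with hJA
  set JB := Ideal.map (rename (Sum.inr : Fin q → Fin p ⊕ Fin q)) (toricIdeal (n := n) k vB)
    with hJB
  set Jρ := Ideal.span {(xP k Xv : MvPolynomial (Fin p ⊕ Fin q) k) - yP k c} with hJρ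
  -- basic sum computations
  have hSA : ∀ (γ : Fin p → ℕ) (i : Fin n), ∑ j, γ j * vA j i = k1 * ∑ j, γ j * A j i := by
    intro γ i
    rw [Finset.mul_sum]
    refine Finset.sum_congr rfl fun j _ => ?_
    simp only [hvAdef]
    ring
  have hSB : ∀ (γ : Fin q → ℕ) (i : Fin n), ∑ j, γ j * vB j i
      = k2 * (∑ j, γ j * u j) * b i := by
    intro γ i
    have h1 : ∀ j : Fin q, γ j * vB j i = (γ j * u j) * (k2 * b i) := by
      intro j
      simp only [hvBdef]
      ring
    rw [Finset.sum_congr rfl fun j _ => h1 j, ← Finset.sum_mul]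
    ring
  have hdegC : ∀ (m : (Fin p ⊕ Fin q) →₀ ℕ) (i : Fin n),
      degf vC m i = k1 * (∑ j, m (Sum.inl j) * A j i)
        + k2 * (∑ j, m (Sum.inr j) * u j) * b i := by
    intro m i
    unfold degf
    rw [Finsupp.sum_fintype _ _ fun j => Nat.zero_mul (vC j i), Fintype.sum_sum_type]
    have h1 : ∀ j : Fin p, vC (Sum.inl j) = vA j := fun j => rfl
    have h2 : ∀ j : Fin q, vC (Sum.inr j) = vB j := fun j => rfl
    simp only [h1, h2]
    rw [hSA, hSB]
  -- the key reduction for binomials, assuming the y-degree inequality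
  have key2 : ∀ (α α' : Fin p → ℕ) (β β' : Fin q → ℕ),
      (∀ i, k1 * (∑ j, α j * A j i) + k2 * (∑ j, β j * u j) * b i
        = k1 * (∑ j, α' j * A j i) + k2 * (∑ j, β' j * u j) * b i) →
      (∑ j, β' j * u j) ≤ (∑ j, β j * u j) →
      (xP k α * yP k β - xP k α' * yP k β' : MvPolynomial (Fin p ⊕ Fin q) k)
        ∈ JA ⊔ JB ⊔ Jρ := by
    intro α α' β β' hEq hle
    obtain ⟨δ, hδ⟩ : ∃ δ, (∑ j, β j * u j) = (∑ j, β' j * u j) + δ :=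
      ⟨_, (Nat.add_sub_cancel' hle).symm⟩
    -- Step A
    have hA : ∀ i, k1 * (∑ j, α j * A j i) + k2 * δ * b i = k1 * (∑ j, α' j * A j i) := by
      intro i
      have h1 := hEq i
      have h2 : k2 * (∑ j, β j * u j) * b i
          = k2 * (∑ j, β' j * u j) * b i + k2 * δ * b i := by rw [hδ]; ring
      omega
    -- Step B : k1 divides k2 * δ
    have hdvd1 : ∀ i, k1 ∣ k2 * δ * b i := by
      intro i
      have h1 := hA i
      have h2 : k2 * δ * b i = k1 * (∑ j, α' j * A j i) - k1 * (∑ j, α j * A j i) := by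
        omega
      rw [h2]
      exact Nat.dvd_sub (dvd_mul_right _ _) (dvd_mul_right _ _)
    have hgcd2 : Finset.univ.gcd (fun i => k2 * δ * b i) = k2 * δ := by
      rw [Finset.gcd_mul_left, hgcdb]
      simp
    have hk1dvd : k1 ∣ k2 * δ := hgcd2 ▸ Finset.dvd_gcd (fun i _ => hdvd1 i)
    obtain ⟨c₀, hc₀⟩ := hk1dvd
    -- c₀ lies in the lattice ideal L
    have hc₀L : (c₀ : ℤ) ∈ L := by
      refine ⟨fun j => (α' j : ℤ) - α j, fun i => ?_⟩
      have h1 := hA i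
      have h1' : k1 * (∑ j, α j * A j i) + k1 * c₀ * b i = k1 * (∑ j, α' j * A j i) := by
        have h2 : k2 * δ * b i = k1 * c₀ * b i := by rw [hc₀]
        omega
      have h3 : (k1 : ℤ) * ((∑ j, (α j : ℤ) * A j i) + (c₀ : ℤ) * b i)
          = (k1 : ℤ) * (∑ j, (α' j : ℤ) * A j i) := by
        have h4 := congrArg (Nat.cast : ℕ → ℤ) h1'
        push_cast at h4
        linarith [h4]
      have hk1pos : 0 < k1 := by rw [hk1def]; exact Nat.mul_pos hg ht
      have hk1ne : (k1 : ℤ) ≠ 0 := Int.natCast_ne_zero.mpr (by omega)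
      have h5 := mul_left_cancel₀ hk1ne h3
      simp only [sub_mul, Finset.sum_sub_distrib]
      linarith [h5]
    have hec₀ : e ∣ c₀ := Int.natCast_dvd_natCast.mp (by exact_mod_cast hLdvd _ hc₀L)
    -- Step C : arithmetic, extract l with δ = k1 * l
    have hgδ : g ∣ δ := by
      have h1 : g ∣ ∑ j, β j * u j := Finset.dvd_sum fun j _ => (hgu j).mul_left _
      have h2 : g ∣ ∑ j, β' j * u j := Finset.dvd_sum fun j _ => (hgu j).mul_left _
      have h3 : δ = (∑ j, β j * u j) - (∑ j, β' j * u j) := by omega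
      rw [h3]
      exact Nat.dvd_sub h1 h2
    obtain ⟨δ', hδ'⟩ := hgδ
    obtain ⟨c₁, hc₁⟩ := hec₀
    have hDδ : D * δ' = t * c₁ := by
      have h1 : (e * g) * (D * δ') = (e * g) * (t * c₁) := by
        have h2 : k2 * δ = g * t * c₀ := by rw [hc₀, hk1def]
        calc (e * g) * (D * δ') = k2 * δ := by rw [hDd, hδ']; ring
          _ = g * t * c₀ := h2
          _ = (e * g) * (t * c₁) := by rw [hc₁]; ring
      exact Nat.eq_of_mul_eq_mul_left (Nat.mul_pos he hg) h1
    have htδ' : t ∣ δ' := by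
      refine (Nat.Coprime.dvd_of_dvd_mul_right htD) ?_
      exact ⟨c₁, by rw [Nat.mul_comm δ' D, hDδ]⟩
    obtain ⟨l, hl⟩ := htδ'
    have hδl : δ = k1 * l := by rw [hδ', hl, hk1def]; ring
    -- Step D : the three pieces
    set α'' : Fin p → ℕ := fun j => α j + Xv j * l with hα''
    set β'' : Fin q → ℕ := fun j => β' j + c j * l with hβ''
    have hs'' : ∑ j, β'' j * u j = (∑ j, β' j * u j) + (g * t) * l := by
      have h1 : ∀ j : Fin q, β'' j * u j = β' j * u j + (c j * u j) * l := by
        intro j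
        simp only [hβ'']
        ring
      rw [Finset.sum_congr rfl fun j _ => h1 j, Finset.sum_add_distrib, ← Finset.sum_mul, hcu]
    have hbB : (pMon k β - pMon k β'' : MvPolynomial (Fin q) k) ∈ toricIdeal k vB := by
      apply pMon_binomial_mem_toric
      intro i
      rw [hSB, hSB, hs'', hδ, hδl, hk1def]
    have hT1 : xP k α * (yP k β - yP k β'') ∈ JB := by
      have h2 : rename Sum.inr (pMon k β - pMon k β'')
          = (yP k β - yP k β'' : MvPolynomial (Fin p ⊕ Fin q) k) := by
        rw [map_sub, rename_pMon_inr, rename_pMon_inr]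
      exact Ideal.mul_mem_left _ _ (h2 ▸ Ideal.mem_map_of_mem _ hbB)
    have hbA : (pMon k α'' - pMon k α' : MvPolynomial (Fin p) k) ∈ toricIdeal k vA := by
      apply pMon_binomial_mem_toric
      intro i
      rw [hSA, hSA]
      have h1 : ∑ j, α'' j * A j i = (∑ j, α j * A j i) + (∑ j, Xv j * A j i) * l := by
        have h2 : ∀ j : Fin p, α'' j * A j i = α j * A j i + (Xv j * A j i) * l := by
          intro j
          simp only [hα'']
          ring
        rw [Finset.sum_congr rfl fun j _ => h2 j, Finset.sum_add_distrib, ← Finset.sum_mul]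
      rw [h1, hXv i]
      have h3 : k2 * δ * b i = k1 * ((d * b i) * l) := by
        rw [hδl, hk2def]
        ring
      calc k1 * ((∑ j, α j * A j i) + (d * b i) * l)
          = k1 * (∑ j, α j * A j i) + k1 * ((d * b i) * l) := by ring
        _ = k1 * (∑ j, α j * A j i) + k2 * δ * b i := by rw [h3]
        _ = k1 * (∑ j, α' j * A j i) := hA i
    have hT3 : (xP k α'' - xP k α') * yP k β' ∈ JA := by
      have h2 : rename Sum.inl (pMon k α'' - pMon k α')
          = (xP k α'' - xP k α' : MvPolynomial (Fin p ⊕ Fin q) k) := by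
        rw [map_sub, rename_pMon_inl, rename_pMon_inl]
      exact Ideal.mul_mem_right _ _ (h2 ▸ Ideal.mem_map_of_mem _ hbA)
    have hT2 : (xP k α * yP k β') * ((yP k c)^l - (xP k Xv)^l) ∈ Jρ := by
      apply Ideal.mem_span_singleton.mpr
      have h1 : (xP k Xv - yP k c : MvPolynomial (Fin p ⊕ Fin q) k)
          ∣ ((xP k Xv)^l - (yP k c)^l) := sub_dvd_pow_sub_pow _ _ l
      have h2 : ((yP k c)^l - (xP k Xv)^l : MvPolynomial (Fin p ⊕ Fin q) k)
          = -((xP k Xv)^l - (yP k c)^l) := by ring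
      rw [h2]
      exact Dvd.dvd.mul_left ((dvd_neg).mpr h1) _
    have hsplit : (xP k α * yP k β - xP k α' * yP k β' : MvPolynomial (Fin p ⊕ Fin q) k)
        = xP k α * (yP k β - yP k β'') + (xP k α * yP k β') * ((yP k c)^l - (xP k Xv)^l)
          + (xP k α'' - xP k α') * yP k β' := by
      have e1 : yP k β'' = (yP k β' * (yP k c)^l : MvPolynomial (Fin p ⊕ Fin q) k) := by
        rw [hβ'', yP_add, yP_mul]
      have e2 : xP k α'' = (xP k α * (xP k Xv)^l : MvPolynomial (Fin p ⊕ Fin q) k) := by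
        rw [hα'', xP_add, xP_mul]
      rw [e1, e2]
      ring
    rw [hsplit]
    refine Submodule.add_mem _ (Submodule.add_mem _ ?_ ?_) ?_
    · exact Ideal.mem_sup_left (Ideal.mem_sup_right hT1)
    · exact Ideal.mem_sup_right hT2
    · exact Ideal.mem_sup_left (Ideal.mem_sup_left hT3)
  -- full reduction for arbitrary binomials
  have key : ∀ (m m' : (Fin p ⊕ Fin q) →₀ ℕ), degf vC m = degf vC m' →
      (monomial m 1 - monomial m' 1 : MvPolynomial (Fin p ⊕ Fin q) k) ∈ JA ⊔ JB ⊔ Jρ := by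
    intro m m' hdeg
    have hEq : ∀ i, k1 * (∑ j, m (Sum.inl j) * A j i)
        + k2 * (∑ j, m (Sum.inr j) * u j) * b i
        = k1 * (∑ j, m' (Sum.inl j) * A j i)
        + k2 * (∑ j, m' (Sum.inr j) * u j) * b i := by
      intro i
      have h := congrFun hdeg i
      rw [hdegC m i, hdegC m' i] at h
      exact h
    rw [monomial_eq_xP_yP m, monomial_eq_xP_yP m']
    rcases le_total (∑ j, m' (Sum.inr j) * u j) (∑ j, m (Sum.inr j) * u j) with h | h
    · exact key2 _ _ _ _ hEq h
    · have h1 := key2 _ _ _ _ (fun i => (hEq i).symm) h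
      have h2 : (xP k (fun j => m (Sum.inl j)) * yP k (fun j => m (Sum.inr j))
          - xP k (fun j => m' (Sum.inl j)) * yP k (fun j => m' (Sum.inr j))
          : MvPolynomial (Fin p ⊕ Fin q) k)
          = -(xP k (fun j => m' (Sum.inl j)) * yP k (fun j => m' (Sum.inr j))
            - xP k (fun j => m (Sum.inl j)) * yP k (fun j => m (Sum.inr j))) := by ring
      rw [h2]
      exact Submodule.neg_mem _ h1
  -- the two inclusions
  apply le_antisymm
  · intro f hf
    have hs := toric_mem_span_binomials vC f hf
    have hsub : {gp : MvPolynomial (Fin p ⊕ Fin q) k | ∃ m m' : (Fin p ⊕ Fin q) →₀ ℕ,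
        degf vC m = degf vC m' ∧ gp = monomial m 1 - monomial m' 1}
        ⊆ ((JA ⊔ JB ⊔ Jρ).restrictScalars k : Set (MvPolynomial (Fin p ⊕ Fin q) k)) := by
      rintro gp ⟨m, m', hdeg, rfl⟩
      exact key m m' hdeg
    exact (Submodule.span_le.mpr hsub) hs
  · refine sup_le (sup_le ?_ ?_) ?_
    · rw [hJA, hvCdef]
      exact map_rename_toric_le_left vA vB
    · rw [hJB, hvCdef]
      exact map_rename_toric_le_right vA vB
    · rw [hJρ, Ideal.span_le, Set.singleton_subset_iff]
      show (xP k Xv - yP k c : MvPolynomial (Fin p ⊕ Fin q) k) ∈ toricIdeal k vC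
      rw [toricIdeal_eq, RingHom.mem_ker, map_sub]
      rw [hvCdef]
      rw [aeval_xP vA vB Xv, aeval_yP vA vB c]
      have h1 : (fun i => ∑ j, Xv j * vA j i) = (fun i => ∑ j, c j * vB j i) := by
        funext i
        rw [hSA, hSB, hXv i, hcu, hk1def, hk2def]
        ring
      rw [h1, sub_self]

end Rev

section Fwd


variable {k : Type} [Field k] {n p q : ℕ}

theorem solution_of_glue (A : Fin p → Fin n → ℕ) (b : Fin n → ℕ)
    (u : Fin q → ℕ) (hu : ∀ j, 0 < u j)
    (h : CanBeGlued k A (fun j i => u j * b i)) :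
    ∃ d : ℕ, 0 < d ∧ ∃ Xv : Fin p → ℕ, ∀ i, ∑ j, Xv j * A j i = d * b i := by
  obtain ⟨k1, k2, hk1, hk2, α, β, hα, hβ, heq⟩ := h
  set vA : Fin p → Fin n → ℕ := fun j i => k1 * A j i with hvA
  set vB : Fin q → Fin n → ℕ := fun j i => k2 * (u j * b i) with hvB
  have hρmem : (xP k α - yP k β : MvPolynomial (Fin p ⊕ Fin q) k)
      ∈ toricIdeal k (Sum.elim vA vB) := by
    rw [heq]
    exact Ideal.mem_sup_right (Ideal.subset_span rfl)
  rw [toricIdeal_eq, RingHom.mem_ker, map_sub, sub_eq_zero] at hρmem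
  rw [aeval_xP vA vB α, aeval_yP vA vB β] at hρmem
  have hdeg := pMon_injective (k := k) hρmem
  refine ⟨k2 * ∑ j, β j * u j, ?_, fun j => k1 * α j, ?_⟩
  · obtain ⟨j0, hj0⟩ := Function.ne_iff.mp hβ
    have h1 : β j0 * u j0 ≤ ∑ j, β j * u j :=
      Finset.single_le_sum (f := fun j => β j * u j) (fun j _ => Nat.zero_le _) (Finset.mem_univ j0)
    have h2 : 0 < β j0 := Nat.pos_of_ne_zero hj0
    have h3 := hu j0
    have h4 : 0 < β j0 * u j0 := Nat.mul_pos h2 h3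
    exact Nat.mul_pos hk2 (lt_of_lt_of_le h4 h1)
  · intro i
    have h1 := congrFun hdeg i
    have h2 : ∑ j, α j * vA j i = ∑ j, (k1 * α j) * A j i := by
      refine Finset.sum_congr rfl fun j _ => ?_
      simp only [hvA]
      ring
    have h3 : ∑ j, β j * vB j i = (k2 * ∑ j, β j * u j) * b i := by
      have h4 : ∀ j : Fin q, β j * vB j i = (β j * u j) * (k2 * b i) := by
        intro j
        simp only [hvB]
        ring
      rw [Finset.sum_congr rfl fun j _ => h4 j, ← Finset.sum_mul]
      ring
    rw [h2, h3] at h1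
    exact h1

end Fwd

/-- Characterization when the elements of `B` lie on a line: for `B = (u₁b,…,u_qb)` with
`q ≥ 2` and `gcd(b₁,…,b_n) = 1`, `⟨A⟩` and `⟨B⟩` can be glued if and only if some positive
multiple of `b` lies in `⟨A⟩`, i.e. `A·X = d·b` has a solution `X ∈ ℕ^p` for some `d > 0`. -/
theorem line_glue_iff (k : Type) [Field k] {n p q : ℕ} (hq : 2 ≤ q)
    (A : Fin p → Fin n → ℕ) (b : Fin n → ℕ) (hb : b ≠ 0)
    (hgcdb : Finset.univ.gcd b = 1)
    (u : Fin q → ℕ) (hu : ∀ j, 0 < u j) :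
    CanBeGlued k A (fun j i => u j * b i) ↔
      ∃ d : ℕ, 0 < d ∧ ∃ Xv : Fin p → ℕ, ∀ i, ∑ j, Xv j * A j i = d * b i := by
  constructor
  · exact solution_of_glue A b u hu
  · rintro ⟨d, hd, Xv, hXv⟩
    have : NeZero q := ⟨by omega⟩
    exact glue_of_solution_s14 A b hb hgcdb u hu d hd Xv hXv
end
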